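/- arXiv:1407.3320 — 7 statements merged into one kernel-verified Lean document; each statement's English description precedes it below -/
import Mathlib

section
/- Let $\oplus_{n\geq 0} I_n$ be a Noetherian non-negatively graded ring, where the $I_n$ form a decreasing chain of ideals in the Noetherian ring $R = I_0$ with $I_m I_n \subseteq I_{m+n}$. Then there exists an integer $l \geq 1$ such that for all $n \geq 1$, $(I_l)^n = I_{ln}$. -/
set_option maxHeartbeats 1000000
set_option synthInstance.maxHeartbeats 400000

/-- The graded ring `⊕ₙ Iₙ` associated to a multiplicative decreasing filtration of
ideals of `R` with `I 0 = R`, realized as the subalgebra of `R[X]` consisting of the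
polynomials whose `n`-th coefficient lies in `I n`. -/
def filtRees (R : Type*) [CommRing R] (I : ℕ → Ideal R)
    (hmul : ∀ m n, I m * I n ≤ I (m + n)) (h0 : I 0 = ⊤) :
    Subalgebra R (Polynomial R) where
  carrier := {p | ∀ n, p.coeff n ∈ I n}
  add_mem' := fun {p q} hp hq n => by
    simpa [Polynomial.coeff_add] using (I n).add_mem (hp n) (hq n)
  mul_mem' := fun {p q} hp hq n => by
    rw [Polynomial.coeff_mul]
    refine Submodule.sum_mem _ fun c hc => ?_
    replace hc : c.1 + c.2 = n := by
      first
        | exact Finset.mem_antidiagonal.mp hc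
        | exact Finset.Nat.mem_antidiagonal.mp hc
        | simpa using hc
    have h := Ideal.mul_mem_mul (hp c.1) (hq c.2)
    exact hc ▸ hmul c.1 c.2 h
  algebraMap_mem' := fun r n => by
    rcases Nat.eq_zero_or_pos n with h | h
    · subst h
      simp [h0]
    · simp [Polynomial.coeff_C, Nat.pos_iff_ne_zero.mp h]


namespace FiltAux

variable {R : Type*} [CommRing R] {I : ℕ → Ideal R}

theorem pow_mem (hmul : ∀ m n, I m * I n ≤ I (m + n)) (h0 : I 0 = ⊤)
    {a : R} {d : ℕ} (ha : a ∈ I d) : ∀ e : ℕ, a ^ e ∈ I (e * d)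
  | 0 => by simp [h0]
  | (e + 1) => by
    have h1 := pow_mem hmul h0 ha e
    have := hmul (e * d) d (Ideal.mul_mem_mul h1 ha)
    rw [pow_succ]
    simpa [add_mul, one_mul] using this

theorem prod_pow_mem (hmul : ∀ m n, I m * I n ≤ I (m + n)) (h0 : I 0 = ⊤)
    {ι : Type*} (s : Finset ι) (d : ι → ℕ) (a : ι → R) (ha : ∀ i, a i ∈ I (d i))
    (e : ι → ℕ) : (∏ i ∈ s, a i ^ e i) ∈ I (∑ i ∈ s, e i * d i) := by
  classical
  induction s using Finset.induction with
  | empty => simp [h0]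
  | insert _ _ hx ih =>
    rename_i i s
    rw [Finset.prod_insert hx, Finset.sum_insert hx]
    exact hmul _ _ (Ideal.mul_mem_mul (pow_mem hmul h0 (ha i) (e i)) ih)

theorem pow_le (hmul : ∀ m n, I m * I n ≤ I (m + n)) (h0 : I 0 = ⊤)
    (m : ℕ) : ∀ n : ℕ, I m ^ n ≤ I (m * n)
  | 0 => by simp [h0]
  | (n + 1) => by
    rw [pow_succ, Nat.mul_succ]
    calc I m ^ n * I m ≤ I (m * n) * I m := Ideal.mul_mono_left (pow_le hmul h0 m n)
    _ ≤ I (m * n + m) := hmul _ _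

/-- The combinatorial heart: a monomial of degree `m * D` (where every `d i` divides `D`)
lies in `I D ^ (m - k) * I (min m k * D)`, where `k` is the number of generators. -/
theorem monomial_claim (hmul : ∀ m n, I m * I n ≤ I (m + n)) (h0 : I 0 = ⊤)
    {ι : Type*} [Fintype ι] (d : ι → ℕ) (a : ι → R)
    (hd : ∀ i, 1 ≤ d i) (ha : ∀ i, a i ∈ I (d i)) :
    ∀ m : ℕ, ∀ e : ι → ℕ, (∑ i, e i * d i) = m * (∏ i, d i) →
      (∏ i, a i ^ e i) ∈ I (∏ i, d i) ^ (m - Fintype.card ι)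
        * I (min m (Fintype.card ι) * (∏ i, d i)) := by
  classical
  set D := ∏ i, d i with hDdef
  set k := Fintype.card ι with hkdef
  have hD : 1 ≤ D := Finset.one_le_prod' fun i _ => hd i
  intro m
  induction m with
  | zero =>
    intro e he
    simp only [Nat.zero_sub, pow_zero, Nat.zero_min, Nat.zero_mul, h0, one_mul]
    exact Submodule.mem_top
  | succ m IH =>
    intro e he
    by_cases hcase : m + 1 ≤ k
    · rw [Nat.sub_eq_zero_of_le hcase, pow_zero, one_mul, min_eq_left hcase]
      rw [← he]
      exact prod_pow_mem hmul h0 _ d a ha e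
    · push_neg at hcase
      have hk_le_m : k ≤ m := Nat.lt_succ_iff.mp hcase
      -- find an index with e i * d i ≥ D
      have hex : ∃ i : ι, D ≤ e i * d i := by
        by_contra hno
        push_neg at hno
        have hbound : (∑ i, e i * d i) ≤ k * (D - 1) := by
          calc (∑ i, e i * d i) ≤ Finset.univ.card • (D - 1) :=
                Finset.sum_le_card_nsmul _ _ _ fun i _ => Nat.le_sub_one_of_lt (hno i)
          _ = k * (D - 1) := by rw [smul_eq_mul, hkdef, Fintype.card]
        rw [he] at hbound
        have h1 : k * (D - 1) ≤ k * D := Nat.mul_le_mul_left _ (Nat.sub_le _ _)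
        have h2 : k * D ≤ m * D := Nat.mul_le_mul_right _ hk_le_m
        have h3 : (m + 1) * D = m * D + D := by ring
        omega
      obtain ⟨i, hi⟩ := hex
      have hdvd : d i ∣ D := Finset.dvd_prod_of_mem d (Finset.mem_univ i)
      set q := D / d i with hqdef
      have hq : q * d i = D := Nat.div_mul_cancel hdvd
      have hqe : q ≤ e i := by
        have := hq ▸ hi
        exact Nat.le_of_mul_le_mul_right this (hd i)
      set e' := Function.update e i (e i - q) with he'def
      have hsum' : (∑ j, e' j * d j) = m * D := by
        have h1 : (∑ j, e' j * d j)
            = (e i - q) * d i + ∑ j ∈ Finset.univ.erase i, e j * d j := by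
          rw [← Finset.add_sum_erase Finset.univ (fun j => e' j * d j) (Finset.mem_univ i)]
          congr 1
          · simp [he'def]
          · exact Finset.sum_congr rfl fun j hj => by
              simp [he'def, Function.update_of_ne (Finset.mem_erase.mp hj).1]
        have h2 : e i * d i + ∑ j ∈ Finset.univ.erase i, e j * d j = (m + 1) * D := by
          rw [Finset.add_sum_erase Finset.univ (fun j => e j * d j) (Finset.mem_univ i)]
          exact he
        have h3 : (e i - q) * d i = e i * d i - D := by
          rw [Nat.sub_mul, hq]
        have h4 : (m + 1) * D = m * D + D := by ring
        omega
      have hprod : (∏ j, a j ^ e j) = a i ^ q * ∏ j, a j ^ e' j := by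
        rw [← Finset.mul_prod_erase Finset.univ (fun j => a j ^ e j) (Finset.mem_univ i),
            ← Finset.mul_prod_erase Finset.univ (fun j => a j ^ e' j) (Finset.mem_univ i)]
        have : ∏ j ∈ Finset.univ.erase i, a j ^ e' j
            = ∏ j ∈ Finset.univ.erase i, a j ^ e j :=
          Finset.prod_congr rfl fun j hj => by
            simp [he'def, Function.update_of_ne (Finset.mem_erase.mp hj).1]
        rw [this, ← mul_assoc]
        congr 1
        rw [he'def]
        simp only [Function.update_self]
        rw [← pow_add, Nat.add_sub_cancel' hqe]
      have hq_mem : a i ^ q ∈ I D := by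
        have := pow_mem hmul h0 (ha i) q
        rwa [hq] at this
      have hIH := IH e' hsum'
      rw [min_eq_right hk_le_m] at hIH
      have hmem : a i ^ q * (∏ j, a j ^ e' j) ∈ I D * (I D ^ (m - k) * I (k * D)) :=
        Ideal.mul_mem_mul hq_mem hIH
      rw [hprod, min_eq_right (le_trans hk_le_m (Nat.le_succ m))]
      have heq : I D * (I D ^ (m - k) * I (k * D)) = I D ^ (m + 1 - k) * I (k * D) := by
        rw [← mul_assoc, mul_comm (I D), ← pow_succ]
        congr 2
        omega
      rwa [heq] at hmem

/-- From generation by monomials, conclude the theorem. -/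
theorem key (hmul : ∀ m n, I m * I n ≤ I (m + n)) (h0 : I 0 = ⊤)
    {ι : Type*} [Fintype ι] [Nonempty ι] (d : ι → ℕ) (a : ι → R)
    (hd : ∀ i, 1 ≤ d i) (ha : ∀ i, a i ∈ I (d i))
    (hgen : ∀ m : ℕ, I m ≤ Ideal.span
      {r | ∃ e : ι → ℕ, (∑ i, e i * d i) = m ∧ r = ∏ i, a i ^ e i}) :
    ∃ l : ℕ, 1 ≤ l ∧ ∀ n : ℕ, 1 ≤ n → I l ^ n = I (l * n) := by
  classical
  set D := ∏ i, d i with hDdef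
  set k := Fintype.card ι with hkdef
  have hD : 1 ≤ D := Finset.one_le_prod' fun i _ => hd i
  have hk : 1 ≤ k := Fintype.card_pos
  refine ⟨k * D, Nat.one_le_iff_ne_zero.mpr (by positivity), fun n hn => ?_⟩
  apply le_antisymm
  · exact pow_le hmul h0 _ _
  · refine le_trans (hgen (k * D * n)) ?_
    rw [Ideal.span_le]
    rintro r ⟨e, he, rfl⟩
    have he' : (∑ i, e i * d i) = (k * n) * D := by rw [he]; ring
    have hc := monomial_claim hmul h0 d a hd ha (k * n) e he'
    have hkn : k ≤ k * n := Nat.le_mul_of_pos_right k hn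
    rw [min_eq_right hkn] at hc
    have h1 : k * n - k = k * (n - 1) := by
      rw [Nat.mul_sub, Nat.mul_one]
    have h2 : I D ^ (k * n - k) ≤ I (k * D) ^ (n - 1) := by
      rw [h1, pow_mul]
      apply Ideal.pow_right_mono
      have := pow_le hmul h0 D k
      rwa [mul_comm D k] at this
    have h3 : I D ^ (k * n - k) * I (k * D) ≤ I (k * D) ^ (n - 1) * I (k * D) :=
      Ideal.mul_mono_left h2
    have h4 : I (k * D) ^ (n - 1) * I (k * D) = I (k * D) ^ n := by
      rw [← pow_succ]
      congr 1
      omega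
    exact h4 ▸ h3 hc


/-- Multiplying a member of the monomial span by a generator. -/
theorem mul_gen_mem {ι : Type*} [Fintype ι] (d : ι → ℕ) (a : ι → R) (i : ι) (m' : ℕ)
    {x : R}
    (hx : x ∈ Ideal.span {r | ∃ e : ι → ℕ, (∑ j, e j * d j) = m' ∧ r = ∏ j, a j ^ e j}) :
    x * a i ∈ Ideal.span
      {r | ∃ e : ι → ℕ, (∑ j, e j * d j) = m' + d i ∧ r = ∏ j, a j ^ e j} := by
  classical
  have h1 : x * a i ∈ Ideal.span
      {r | ∃ e : ι → ℕ, (∑ j, e j * d j) = m' ∧ r = ∏ j, a j ^ e j} * Ideal.span {a i} :=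
    Ideal.mul_mem_mul hx (Ideal.subset_span rfl)
  refine le_trans (le_of_eq (Ideal.span_mul_span' _ _)) ?_ h1
  rw [Ideal.span_le]
  rintro r ⟨u, ⟨e, he, rfl⟩, v, hv, rfl⟩
  rw [Set.mem_singleton_iff] at hv
  subst hv
  apply Ideal.subset_span
  refine ⟨Function.update e i (e i + 1), ?_, ?_⟩
  · have hA : (∑ j, Function.update e i (e i + 1) j * d j)
        = (e i + 1) * d i + ∑ j ∈ Finset.univ.erase i, e j * d j := by
      rw [← Finset.add_sum_erase Finset.univ
        (fun j => Function.update e i (e i + 1) j * d j) (Finset.mem_univ i)]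
      congr 1
      · simp
      · exact Finset.sum_congr rfl fun j hj => by
          simp [Function.update_of_ne (Finset.mem_erase.mp hj).1]
    have hB : e i * d i + ∑ j ∈ Finset.univ.erase i, e j * d j = m' := by
      rw [Finset.add_sum_erase Finset.univ (fun j => e j * d j) (Finset.mem_univ i)]
      exact he
    have hC : (e i + 1) * d i = e i * d i + d i := by ring
    omega
  · rw [← Finset.mul_prod_erase Finset.univ
        (fun j => a j ^ Function.update e i (e i + 1) j) (Finset.mem_univ i)]
    rw [← Finset.mul_prod_erase Finset.univ (fun j => a j ^ e j) (Finset.mem_univ i)]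
    have h2 : (∏ j ∈ Finset.univ.erase i, a j ^ Function.update e i (e i + 1) j)
        = ∏ j ∈ Finset.univ.erase i, a j ^ e j :=
      Finset.prod_congr rfl fun j hj => by
        simp [Function.update_of_ne (Finset.mem_erase.mp hj).1]
    rw [h2]
    simp only [Function.update_self]
    ring

end FiltAux

open FiltAux in
/-- A homogeneous element of `filtRees`. -/
noncomputable def FiltAux.homog {R : Type*} [CommRing R] {I : ℕ → Ideal R}
    (hmul : ∀ m n, I m * I n ≤ I (m + n)) (h0 : I 0 = ⊤)
    (a : R) (n : ℕ) (ha : a ∈ I n) : filtRees R I hmul h0 :=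
  ⟨Polynomial.C a * Polynomial.X ^ n, fun m => by
    rw [Polynomial.coeff_C_mul, Polynomial.coeff_X_pow]
    by_cases h : m = n
    · subst h; simpa using ha
    · simp [h]⟩

@[simp] theorem FiltAux.homog_coe {R : Type*} [CommRing R] {I : ℕ → Ideal R}
    (hmul : ∀ m n, I m * I n ≤ I (m + n)) (h0 : I 0 = ⊤)
    (a : R) (n : ℕ) (ha : a ∈ I n) :
    (FiltAux.homog hmul h0 a n ha : Polynomial R) = Polynomial.C a * Polynomial.X ^ n := rfl

theorem FiltAux.mem_filtRees {R : Type*} [CommRing R] {I : ℕ → Ideal R}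
    (hmul : ∀ m n, I m * I n ≤ I (m + n)) (h0 : I 0 = ⊤) {p : Polynomial R} :
    p ∈ filtRees R I hmul h0 ↔ ∀ n, p.coeff n ∈ I n := Iff.rfl

/-- The irrelevant ideal of `filtRees`. -/
def FiltAux.irrelevant {R : Type*} [CommRing R] (I : ℕ → Ideal R)
    (hmul : ∀ m n, I m * I n ≤ I (m + n)) (h0 : I 0 = ⊤) :
    Ideal (filtRees R I hmul h0) where
  carrier := {p | (p : Polynomial R).coeff 0 = 0}
  add_mem' := fun {p q} hp hq => by
    show ((p + q : filtRees R I hmul h0) : Polynomial R).coeff 0 = 0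
    have : ((p + q : filtRees R I hmul h0) : Polynomial R)
        = (p : Polynomial R) + (q : Polynomial R) := rfl
    rw [this, Polynomial.coeff_add, hp, hq, add_zero]
  zero_mem' := by
    show ((0 : filtRees R I hmul h0) : Polynomial R).coeff 0 = 0
    simp
  smul_mem' := fun c p hp => by
    show ((c • p : filtRees R I hmul h0) : Polynomial R).coeff 0 = 0
    have : ((c • p : filtRees R I hmul h0) : Polynomial R)
        = (c : Polynomial R) * (p : Polynomial R) := rfl
    rw [this, Polynomial.mul_coeff_zero, hp, mul_zero]

theorem FiltAux.mem_irrelevant_iff {R : Type*} [CommRing R] {I : ℕ → Ideal R}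
    (hmul : ∀ m n, I m * I n ≤ I (m + n)) (h0 : I 0 = ⊤) (p : filtRees R I hmul h0) :
    p ∈ FiltAux.irrelevant I hmul h0 ↔ (p : Polynomial R).coeff 0 = 0 := Iff.rfl

/-- If `⊕ₙ Iₙ` is a Noetherian non-negatively graded ring, where the `Iₙ`
form a decreasing chain of ideals of the Noetherian ring `R = I₀` with `Iₘ Iₙ ⊆ I_{m+n}`,
then there is `l ≥ 1` with `(I l)ⁿ = I (l * n)` for all `n ≥ 1`. -/
theorem filtration_power_stabilizes {R : Type*} [CommRing R] [IsNoetherianRing R]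
    (I : ℕ → Ideal R) (hdec : ∀ n, I (n + 1) ≤ I n)
    (hmul : ∀ m n, I m * I n ≤ I (m + n)) (h0 : I 0 = ⊤)
    (hS : IsNoetherianRing (filtRees R I hmul h0)) :
    ∃ l : ℕ, 1 ≤ l ∧ ∀ n : ℕ, 1 ≤ n → I l ^ n = I (l * n) := by
  classical
  set S := filtRees R I hmul h0 with hSdef
  haveI := hS
  obtain ⟨T, hT⟩ := IsNoetherian.noetherian (FiltAux.irrelevant I hmul h0)
  set N := T.sup fun t => ((t : Polynomial R)).natDegree with hNdef
  set ι := Option ({x // x ∈ T} × Fin N) with hidef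
  haveI : Nonempty ι := ⟨none⟩
  set d : ι → ℕ := fun i => i.elim 1 fun p => p.2.1 + 1 with hddef
  set a : ι → R := fun i => i.elim 0 fun p => ((p.1 : S) : Polynomial R).coeff (p.2.1 + 1)
    with haddef
  have hd : ∀ i, 1 ≤ d i := by rintro (_ | ⟨t, n⟩) <;> simp [hddef]
  have ha : ∀ i, a i ∈ I (d i) := by
    rintro (_ | ⟨t, n⟩)
    · simp [haddef, hddef]
    · exact ((FiltAux.mem_filtRees hmul h0).mp (t : S).2) (n.1 + 1)
  set gen : ι → S := fun i => FiltAux.homog hmul h0 (a i) (d i) (ha i) with hgendef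
  -- every element of T is in the span of the homogeneous generators
  have hT' : ∀ t : S, ∀ ht : t ∈ T, t ∈ Ideal.span (Set.range gen) := by
    intro t ht
    have htP : t ∈ FiltAux.irrelevant I hmul h0 := by
      rw [← hT]; exact Submodule.subset_span ht
    have ht0 : (t : Polynomial R).coeff 0 = 0 :=
      (FiltAux.mem_irrelevant_iff hmul h0 t).mp htP
    have hdeg : (t : Polynomial R).natDegree ≤ N :=
      Finset.le_sup (f := fun t : S => ((t : Polynomial R)).natDegree) ht
    have key : t = ∑ n : Fin N, gen (some (⟨t, ht⟩, n)) := by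
      apply Subtype.ext
      rw [AddSubmonoidClass.coe_finset_sum]
      apply Polynomial.ext
      intro m
      rw [Polynomial.finset_sum_coeff]
      simp only [hgendef, FiltAux.homog_coe, Polynomial.coeff_C_mul, Polynomial.coeff_X_pow,
        hddef, haddef, Option.elim]
      rcases Nat.eq_zero_or_pos m with rfl | hm
      · simp [ht0]
      · by_cases hmN : m ≤ N
        · rw [Finset.sum_eq_single (⟨m - 1, by omega⟩ : Fin N)]
          · rw [if_pos (by simp; omega), mul_one]
            congr 1
            simp only []
            omega
          · intro b _ hb
            rw [if_neg, mul_zero]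
            intro hcon
            apply hb
            apply Fin.ext
            simp only []
            omega
          · intro hcon
            exact absurd (Finset.mem_univ _) hcon
        · push_neg at hmN
          rw [Polynomial.coeff_eq_zero_of_natDegree_lt (lt_of_le_of_lt hdeg hmN)]
          symm
          apply Finset.sum_eq_zero
          intro b hb
          rw [if_neg, mul_zero]
          have : (b : ℕ) < N := b.2
          omega
    rw [key]
    exact Submodule.sum_mem _ fun n _ => Ideal.subset_span ⟨_, rfl⟩
  have hP_le : FiltAux.irrelevant I hmul h0 ≤ Ideal.span (Set.range gen) := by
    rw [← hT]
    exact Submodule.span_le.mpr fun t ht => hT' t ht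
  -- generation of each I m by monomials
  have hgen : ∀ m : ℕ, I m ≤ Ideal.span
      {r | ∃ e : ι → ℕ, (∑ i, e i * d i) = m ∧ r = ∏ i, a i ^ e i} := by
    intro m
    induction m using Nat.strong_induction_on with
    | _ m IH =>
      intro x hx
      rcases Nat.eq_zero_or_pos m with rfl | hm
      · have h1 : (1 : R) ∈ {r | ∃ e : ι → ℕ, (∑ i, e i * d i) = 0 ∧ r = ∏ i, a i ^ e i} :=
          ⟨0, by simp, by simp⟩
        simpa using Ideal.mul_mem_left _ x (Ideal.subset_span h1)
      · have hmem : FiltAux.homog hmul h0 x m hx ∈ FiltAux.irrelevant I hmul h0 := by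
          rw [FiltAux.mem_irrelevant_iff, FiltAux.homog_coe, Polynomial.coeff_C_mul,
            Polynomial.coeff_X_pow, if_neg (by omega), mul_zero]
        have hsp := hP_le hmem
        obtain ⟨c, hc⟩ := (Submodule.mem_span_range_iff_exists_fun _).mp hsp
        simp only [smul_eq_mul] at hc
        have hval : (∑ i, if d i ≤ m
            then ((c i : Polynomial R) * Polynomial.C (a i)).coeff (m - d i) else 0) = x := by
          have h := congrArg (fun p : S => (p : Polynomial R).coeff m) hc
          simp only [AddSubmonoidClass.coe_finset_sum, Polynomial.finset_sum_coeff,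
            MulMemClass.coe_mul, hgendef, FiltAux.homog_coe, ← mul_assoc,
            Polynomial.coeff_mul_X_pow'] at h
          rw [h, if_pos le_rfl, Nat.sub_self, Polynomial.coeff_C_zero]
        rw [← hval]
        refine Submodule.sum_mem _ fun i _ => ?_
        split
        · next hdi =>
            rw [Polynomial.coeff_mul_C]
            have hdi1 := hd i
            have hIH := IH (m - d i) (by omega)
              (((FiltAux.mem_filtRees hmul h0).mp (c i).2) (m - d i))
            have hres := FiltAux.mul_gen_mem d a i (m - d i) hIH
            have heq : m - d i + d i = m := by omega
            rwa [heq] at hres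
        · exact Submodule.zero_mem _
  exact FiltAux.key hmul h0 d a hd ha hgen
end

section
/- Let $R$ be a Noetherian ring, $I$ an ideal, and $M$ a finitely generated $R$-module with a filtration $M = M_0 \supseteq M_1 \supseteq \cdots$ satisfying $I M_n \subseteq M_{n+1}$ for all $n$ and such that $\oplus_n M_n$ is a finitely generated module over the Rees ring $\oplus_n I^n$. Then the filtrations $\{M_n\}$ and $\{I^n M\}$ are cofinal: for every $k$ there exists $n$ such that $M_n \subseteq I^k M$. -/
universe u
/-- Let `R` be Noetherian, `I` an ideal, and `M` a finitely generated
`R`-module with a filtration `M = M₀ ⊇ M₁ ⊇ ⋯` satisfying `I Mₙ ⊆ Mₙ₊₁` and such that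
`⊕ₙ Mₙ` is a finitely generated module over the Rees ring `⊕ₙ Iⁿ`.  Then the filtrations
`{Mₙ}` and `{Iⁿ M}` are cofinal: for every `k` there is `n` with `Mₙ ⊆ Iᵏ M`. -/
theorem filtration_cofinal {R M : Type u} [CommRing R] [IsNoetherianRing R]
    [AddCommGroup M] [Module R M] [Module.Finite R M]
    (I : Ideal R) (F : I.Filtration M) (hF0 : F.N 0 = ⊤)
    (hFG : F.submodule.FG) :
    ∀ k : ℕ, ∃ n : ℕ, F.N n ≤ I ^ k • (⊤ : Submodule R M) := by
  have hstable : F.Stable := by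
    rw [← Ideal.Filtration.submodule_fg_iff_stable]
    · exact hFG
    · intro i
      exact IsNoetherian.noetherian _
  obtain ⟨n₀, hn₀⟩ := hstable.exists_pow_smul_eq
  intro k
  refine ⟨n₀ + k, ?_⟩
  rw [hn₀ k]
  exact Submodule.smul_mono le_rfl le_top
end

section
/- Let $R$ be a Noetherian ring, $I$ an ideal, and $M$ an $I$-filtered module. Then there exists a finite set $\Lambda$ of prime ideals of $R$ such that for every $n$, the quotient $M/M_n$ admits a prime filtration all of whose prime factors belong to $\Lambda$. -/
set_option synthInstance.maxHeartbeats 1000000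
set_option maxHeartbeats 1000000


universe u

/-- `HasPrimeFiltrationIn R M Λ` says that the `R`-module `M` admits a prime filtration
`0 = M₀ ⊆ M₁ ⊆ ⋯ ⊆ M_k = M` with each quotient `Mᵢ/Mᵢ₋₁` isomorphic to `R ⧸ P` for some
prime ideal `P ∈ Λ`. -/
def HasPrimeFiltrationIn (R : Type*) [CommRing R] (M : Type*) [AddCommGroup M]
    [Module R M] (Λ : Set (Ideal R)) : Prop :=
  ∃ (k : ℕ) (f : Fin (k + 1) → Submodule R M), Monotone f ∧ f 0 = ⊥ ∧ f (Fin.last k) = ⊤ ∧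
    ∀ i : Fin k, ∃ P ∈ Λ, P.IsPrime ∧
      Nonempty ((↥(f i.succ) ⧸ Submodule.comap (f i.succ).subtype (f i.castSucc)) ≃ₗ[R]
        (R ⧸ P))

namespace PFilt

variable {R : Type u} [CommRing R]

/-! ### Modules built from prime cyclic modules by extensions -/

def builtStep (Λ : Set (Ideal R)) (Q : (M : Type u) → [AddCommGroup M] → [Module R M] → Prop)
    (M : Type u) [AddCommGroup M] [Module R M] : Prop :=
  Subsingleton M ∨ ∃ S : Submodule R M, Q ↥S ∧ ∃ P ∈ Λ, P.IsPrime ∧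
    Nonempty ((M ⧸ S) ≃ₗ[R] (R ⧸ P))

def BuiltN (R : Type u) [CommRing R] (Λ : Set (Ideal R)) :
    ℕ → (M : Type u) → [AddCommGroup M] → [Module R M] → Prop
  | 0 => fun M _ _ => Subsingleton M
  | n+1 => builtStep Λ (BuiltN R Λ n)

def Built (R : Type u) [CommRing R] (Λ : Set (Ideal R)) (M : Type u) [AddCommGroup M]
    [Module R M] : Prop :=
  ∃ n, BuiltN R Λ n M

theorem builtN_congr {Λ : Set (Ideal R)} :
    ∀ (n : ℕ) (M M' : Type u) [AddCommGroup M] [Module R M] [AddCommGroup M'] [Module R M']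
      (_ : M ≃ₗ[R] M'), BuiltN R Λ n M → BuiltN R Λ n M' := by
  intro n
  induction n with
  | zero =>
    intro M M' _ _ _ _ e h0
    exact ⟨fun a b => e.symm.injective (@Subsingleton.elim _ h0 _ _)⟩
  | succ n ih =>
    intro M M' _ _ _ _ e hs
    rcases hs with h0 | ⟨S, hS, P, hP, hp, ⟨q⟩⟩
    · exact Or.inl ⟨fun a b => e.symm.injective (@Subsingleton.elim _ h0 _ _)⟩
    · refine Or.inr ⟨S.map (e : M →ₗ[R] M'), ih _ _ (e.submoduleMap S) hS, P, hP, hp, ?_⟩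
      exact ⟨((Submodule.Quotient.equiv S _ e rfl).symm.trans q)⟩

theorem Built.congr {Λ : Set (Ideal R)} {M M' : Type u} [AddCommGroup M] [Module R M]
    [AddCommGroup M'] [Module R M'] (e : M ≃ₗ[R] M') (hb : Built R Λ M) : Built R Λ M' := by
  obtain ⟨n, hn⟩ := hb
  exact ⟨n, builtN_congr n M M' e hn⟩

theorem builtN_mono {Λ Λ' : Set (Ideal R)} (h : Λ ⊆ Λ') :
    ∀ (n : ℕ) (M : Type u) [AddCommGroup M] [Module R M], BuiltN R Λ n M → BuiltN R Λ' n M := by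
  intro n
  induction n with
  | zero => intro M _ _ h0; exact h0
  | succ n ih =>
    intro M _ _ hs
    rcases hs with h0 | ⟨S, hS, P, hP, hp, he⟩
    · exact Or.inl h0
    · exact Or.inr ⟨S, ih _ hS, P, h hP, hp, he⟩

theorem Built.mono {Λ Λ' : Set (Ideal R)} (h : Λ ⊆ Λ') {M : Type u} [AddCommGroup M] [Module R M]
    (hb : Built R Λ M) : Built R Λ' M := by
  obtain ⟨n, hn⟩ := hb
  exact ⟨n, builtN_mono h n M hn⟩

theorem built_of_subsingleton {Λ : Set (Ideal R)} {M : Type u} [AddCommGroup M] [Module R M]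
    (h : Subsingleton M) : Built R Λ M := ⟨0, h⟩

theorem built_quot_prime {Λ : Set (Ideal R)} {P : Ideal R} (hP : P ∈ Λ) (hp : P.IsPrime) :
    Built R Λ (R ⧸ P) := by
  refine ⟨1, Or.inr ⟨⊥, ?_, P, hP, hp, ⟨Submodule.quotEquivOfEqBot _ rfl⟩⟩⟩
  show Subsingleton _
  infer_instance

/-- Extension: if a submodule and the quotient are built, so is the module. -/
theorem builtN_ext {Λ Λ' : Set (Ideal R)} :
    ∀ (n : ℕ) (N : Type u) [AddCommGroup N] [Module R N], BuiltN R Λ' n N →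
    ∀ (M : Type u) [AddCommGroup M] [Module R M] (S : Submodule R M),
      Built R Λ ↥S → ((M ⧸ S) ≃ₗ[R] N) → Built R (Λ ∪ Λ') M := by
  intro n
  induction n with
  | zero =>
    intro N _ _ h0 M _ _ S hS e
    have hq : Subsingleton (M ⧸ S) := ⟨fun a b => e.injective (@Subsingleton.elim _ h0 _ _)⟩
    have htop : S = ⊤ := Submodule.Quotient.subsingleton_iff.mp hq
    exact (hS.congr (LinearEquiv.ofTop S htop)).mono Set.subset_union_left
  | succ n ih =>
    intro N _ _ hs M _ _ S hS e
    rcases hs with h0 | ⟨T, hT, P, hP, hp, ⟨q⟩⟩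
    · have hq : Subsingleton (M ⧸ S) := ⟨fun a b => e.injective (@Subsingleton.elim _ h0 _ _)⟩
      have htop : S = ⊤ := Submodule.Quotient.subsingleton_iff.mp hq
      exact (hS.congr (LinearEquiv.ofTop S htop)).mono Set.subset_union_left
    · set φ : M →ₗ[R] N := (e : (M ⧸ S) →ₗ[R] N).comp S.mkQ with hφ
      have hφsurj : Function.Surjective φ := e.surjective.comp (Submodule.mkQ_surjective S)
      have hkerφ : ∀ x : M, φ x = 0 ↔ x ∈ S := by
        intro x
        rw [hφ]
        simp only [LinearMap.comp_apply, LinearEquiv.coe_coe]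
        rw [← (Submodule.Quotient.mk_eq_zero S), ← e.map_zero]
        exact ⟨fun h => e.injective h, fun h => by rw [Submodule.mkQ_apply, h, e.map_zero]⟩
      set S₂ : Submodule R M := T.comap φ with hS₂def
      have hS2 : S ≤ S₂ := by
        intro x hx
        show φ x ∈ T
        rw [(hkerφ x).mpr hx]
        exact T.zero_mem
      have hrest : ∀ x : M, x ∈ S₂ → φ x ∈ T := fun x hx => hx
      set ψ : ↥S₂ →ₗ[R] ↥T := φ.restrict hrest with hψ
      have hψsurj : Function.Surjective ψ := by
        rintro ⟨t, ht⟩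
        obtain ⟨x, hx⟩ := hφsurj t
        refine ⟨⟨x, ?_⟩, ?_⟩
        · show φ x ∈ T; rw [hx]; exact ht
        · exact Subtype.ext (by simpa [hψ, LinearMap.restrict_apply] using hx)
      have hker : LinearMap.ker ψ = Submodule.comap S₂.subtype S := by
        ext ⟨x, hx⟩
        simp only [LinearMap.mem_ker, Submodule.mem_comap, Submodule.coe_subtype]
        rw [Subtype.ext_iff]
        show (φ x : N) = 0 ↔ x ∈ S
        exact hkerφ x
      have equiv1 : (↥S₂ ⧸ Submodule.comap S₂.subtype S) ≃ₗ[R] ↥T :=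
        (Submodule.quotEquivOfEq _ _ hker.symm).trans (ψ.quotKerEquivOfSurjective hψsurj)
      have hS' : Built R Λ ↥(Submodule.comap S₂.subtype S) :=
        hS.congr (Submodule.comapSubtypeEquivOfLe hS2).symm
      have hBS₂ : Built R (Λ ∪ Λ') ↥S₂ := ih ↥T hT ↥S₂ _ hS' equiv1
      set χ : M →ₗ[R] N ⧸ T := T.mkQ.comp φ with hχ
      have hχsurj : Function.Surjective χ := (Submodule.mkQ_surjective T).comp hφsurj
      have hkerχ : Submodule.comap φ T = LinearMap.ker χ := by
        ext x
        simp [hχ, Submodule.Quotient.mk_eq_zero]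
      have equiv2 : (M ⧸ S₂) ≃ₗ[R] (N ⧸ T) :=
        (Submodule.quotEquivOfEq _ _ hkerχ).trans (χ.quotKerEquivOfSurjective hχsurj)
      obtain ⟨m, hm⟩ := hBS₂
      exact ⟨m + 1, Or.inr ⟨S₂, hm, P, Set.mem_union_right _ hP, hp, ⟨equiv2.trans q⟩⟩⟩

theorem Built.ext {Λ Λ' : Set (Ideal R)} {M : Type u} [AddCommGroup M] [Module R M]
    (S : Submodule R M) (h1 : Built R Λ ↥S) (h2 : Built R Λ' (M ⧸ S)) :
    Built R (Λ ∪ Λ') M := by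
  obtain ⟨n, hn⟩ := h2
  exact builtN_ext n (M ⧸ S) hn M S h1 (LinearEquiv.refl R _)

/-! ### Subquotients -/

/-- Workhorse: a linear map inducing an isomorphism of subquotients. -/
theorem sq_equiv {M M₂ : Type u} [AddCommGroup M] [Module R M] [AddCommGroup M₂] [Module R M₂]
    (φ : M →ₗ[R] M₂) {A B : Submodule R M} {A' B' : Submodule R M₂}
    (hmap : ∀ x ∈ B, φ x ∈ B')
    (hsurj : ∀ y ∈ B', ∃ x ∈ B, y - φ x ∈ A')
    (hker : ∀ x ∈ B, (x ∈ A ↔ φ x ∈ A')) :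
    Nonempty ((↥B ⧸ Submodule.comap B.subtype A) ≃ₗ[R]
      (↥B' ⧸ Submodule.comap B'.subtype A')) := by
  set ψ : ↥B →ₗ[R] ↥B' := φ.restrict hmap with hψ
  set χ : ↥B →ₗ[R] (↥B' ⧸ Submodule.comap B'.subtype A') :=
    (Submodule.comap B'.subtype A').mkQ.comp ψ with hχ
  have hχsurj : Function.Surjective χ := by
    intro z
    obtain ⟨⟨y, hy⟩, rfl⟩ := Submodule.Quotient.mk_surjective _ z
    obtain ⟨x, hx, hsub⟩ := hsurj y hy
    refine ⟨⟨x, hx⟩, ?_⟩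
    show Submodule.Quotient.mk _ = Submodule.Quotient.mk _
    rw [Submodule.Quotient.eq]
    show (φ x - y : M₂) ∈ A'
    simpa using A'.neg_mem hsub
  have hkerχ : LinearMap.ker χ = Submodule.comap B.subtype A := by
    ext ⟨x, hx⟩
    simp only [LinearMap.mem_ker, hχ, LinearMap.comp_apply, Submodule.mkQ_apply,
      Submodule.Quotient.mk_eq_zero, Submodule.mem_comap, Submodule.coe_subtype]
    show (φ x ∈ A') ↔ x ∈ A
    exact (hker x hx).symm
  exact ⟨(Submodule.quotEquivOfEq _ _ hkerχ.symm).trans (χ.quotKerEquivOfSurjective hχsurj)⟩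

theorem sq_top_equiv {M : Type u} [AddCommGroup M] [Module R M] {A B : Submodule R M}
    (hB : B = ⊤) :
    Nonempty ((↥B ⧸ Submodule.comap B.subtype A) ≃ₗ[R] (M ⧸ A)) := by
  set χ : ↥B →ₗ[R] M ⧸ A := A.mkQ.comp B.subtype with hχ
  have hχsurj : Function.Surjective χ := by
    intro z
    obtain ⟨y, rfl⟩ := Submodule.Quotient.mk_surjective _ z
    exact ⟨⟨y, hB ▸ Submodule.mem_top⟩, rfl⟩
  have hker : LinearMap.ker χ = Submodule.comap B.subtype A := by
    ext x
    simp [hχ, Submodule.Quotient.mk_eq_zero]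
  exact ⟨(Submodule.quotEquivOfEq _ _ hker.symm).trans (χ.quotKerEquivOfSurjective hχsurj)⟩

theorem built_sq_of_le {Λ : Set (Ideal R)} {M : Type u} [AddCommGroup M] [Module R M]
    {A B : Submodule R M} (h : B ≤ A) :
    Built R Λ (↥B ⧸ Submodule.comap B.subtype A) := by
  have : Submodule.comap B.subtype A = ⊤ := by
    rw [eq_top_iff]; exact fun x _ => h x.2
  exact built_of_subsingleton (this ▸ Submodule.Quotient.subsingleton_iff.mpr rfl)

/-- Splicing subquotients along a chain `A ≤ B₁ ≤ B₂`. -/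
theorem built_sq_step {M : Type u} [AddCommGroup M] [Module R M]
    {A B₁ B₂ : Submodule R M} (h1 : A ≤ B₁) (h2 : B₁ ≤ B₂) {Λ₁ Λ₂ : Set (Ideal R)}
    (hb1 : Built R Λ₁ (↥B₁ ⧸ Submodule.comap B₁.subtype A))
    (hb2 : Built R Λ₂ (↥B₂ ⧸ Submodule.comap B₂.subtype B₁)) :
    Built R (Λ₁ ∪ Λ₂) (↥B₂ ⧸ Submodule.comap B₂.subtype A) := by
  set A₂ : Submodule R ↥B₂ := Submodule.comap B₂.subtype A with hA₂
  set C : Submodule R ↥B₂ := Submodule.comap B₂.subtype B₁ with hC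
  have hAC : A₂ ≤ C := fun x hx => h1 hx
  set S : Submodule R (↥B₂ ⧸ A₂) := C.map A₂.mkQ with hSdef
  -- (i) ↥S ≃ₗ ↥B₁ ⧸ comap B₁.subtype A
  set ι : ↥B₁ →ₗ[R] ↥B₂ := Submodule.inclusion h2 with hι
  have hmem : ∀ x : ↥B₁, A₂.mkQ (ι x) ∈ S := by
    intro x
    exact Submodule.mem_map_of_mem (show ι x ∈ C from x.2)
  set χ₁ : ↥B₁ →ₗ[R] ↥S := (A₂.mkQ.comp ι).codRestrict S (fun x => hmem x) with hχ₁
  have hχ₁surj : Function.Surjective χ₁ := by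
    rintro ⟨s, hs⟩
    obtain ⟨c, hc, hcs⟩ := hs
    refine ⟨⟨(c : M), hc⟩, Subtype.ext ?_⟩
    show A₂.mkQ (ι ⟨(c : M), hc⟩) = s
    rw [← hcs]
    congr 1
  have hkerχ₁ : LinearMap.ker χ₁ = Submodule.comap B₁.subtype A := by
    ext x
    simp only [LinearMap.mem_ker, Submodule.mem_comap, Submodule.coe_subtype]
    rw [Subtype.ext_iff]
    show A₂.mkQ (ι x) = 0 ↔ (x : M) ∈ A
    rw [Submodule.mkQ_apply, Submodule.Quotient.mk_eq_zero]
    exact Iff.rfl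
  have equiv1 : (↥B₁ ⧸ Submodule.comap B₁.subtype A) ≃ₗ[R] ↥S :=
    (Submodule.quotEquivOfEq _ _ hkerχ₁.symm).trans (χ₁.quotKerEquivOfSurjective hχ₁surj)
  -- (ii) (↥B₂ ⧸ A₂) ⧸ S ≃ₗ ↥B₂ ⧸ C
  set χ₂ : ↥B₂ →ₗ[R] ((↥B₂ ⧸ A₂) ⧸ S) := S.mkQ.comp A₂.mkQ with hχ₂
  have hχ₂surj : Function.Surjective χ₂ :=
    (Submodule.mkQ_surjective S).comp (Submodule.mkQ_surjective A₂)
  have hkerχ₂ : LinearMap.ker χ₂ = C := by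
    ext x
    simp only [LinearMap.mem_ker, hχ₂, LinearMap.comp_apply, Submodule.mkQ_apply,
      Submodule.Quotient.mk_eq_zero]
    constructor
    · rintro ⟨c, hc, hcx⟩
      have : x - c ∈ A₂ := by
        rw [← Submodule.Quotient.eq]
        exact hcx.symm
      have hxc : x = c + (x - c) := by abel
      rw [hxc]
      exact C.add_mem hc (hAC this)
    · intro hx
      exact Submodule.mem_map_of_mem hx
  have equiv2 : (↥B₂ ⧸ C) ≃ₗ[R] ((↥B₂ ⧸ A₂) ⧸ S) :=
    (Submodule.quotEquivOfEq _ _ hkerχ₂.symm).trans (χ₂.quotKerEquivOfSurjective hχ₂surj)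
  exact Built.ext S (hb1.congr equiv1) (hb2.congr equiv2)


theorem hpf_of_subsingleton {M : Type u} [AddCommGroup M] [Module R M] (h : Subsingleton M)
    (Λ : Set (Ideal R)) : HasPrimeFiltrationIn R M Λ := by
  refine ⟨0, fun _ => ⊥, monotone_const, rfl, ?_, fun i => i.elim0⟩
  rw [eq_top_iff]
  intro x _
  rw [@Subsingleton.elim _ h x 0]
  exact Submodule.zero_mem ⊥

theorem hpf_of_builtN :
    ∀ (n : ℕ) (M : Type u) [AddCommGroup M] [Module R M] (Λ : Set (Ideal R)),
      BuiltN R Λ n M → HasPrimeFiltrationIn R M Λ := by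
  intro n
  induction n with
  | zero => intro M _ _ Λ h0; exact hpf_of_subsingleton h0 Λ
  | succ n ih =>
    intro M _ _ Λ hs
    rcases hs with h0 | ⟨S, hS, P, hP, hp, ⟨q⟩⟩
    · exact hpf_of_subsingleton h0 Λ
    · obtain ⟨k, f, hmono, hf0, hlast, hpieces⟩ := ih ↥S Λ hS
      set g : Fin (k + 1 + 1) → Submodule R M :=
        Fin.snoc (fun i => (f i).map S.subtype) ⊤ with hg
      refine ⟨k + 1, g, ?_, ?_, ?_, ?_⟩
      · intro i j hij
        induction j using Fin.lastCases with
        | last => rw [hg]; rw [Fin.snoc_last]; exact le_top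
        | cast j' =>
          have hine : i ≠ Fin.last _ := by
            intro h
            rw [h] at hij
            exact absurd (le_antisymm hij (Fin.le_last _) ▸ Fin.castSucc_lt_last j')
              (by simp)
          obtain ⟨i', rfl⟩ := Fin.exists_castSucc_eq.mpr hine
          rw [hg, Fin.snoc_castSucc, Fin.snoc_castSucc]
          exact Submodule.map_mono (hmono (Fin.castSucc_le_castSucc_iff.mp hij))
      · rw [hg, ← Fin.castSucc_zero, Fin.snoc_castSucc, hf0, Submodule.map_bot]
      · rw [hg, Fin.snoc_last]
      · intro i
        induction i using Fin.lastCases with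
        | last =>
          refine ⟨P, hP, hp, ?_⟩
          have h1 : g (Fin.last k).succ = ⊤ := by
            rw [Fin.succ_last, hg, Fin.snoc_last]
          have h2 : g (Fin.last k).castSucc = S := by
            rw [hg, Fin.snoc_castSucc, hlast, Submodule.map_top, Submodule.range_subtype]
          obtain ⟨e⟩ := sq_top_equiv (A := g (Fin.last k).castSucc) h1
          exact ⟨e.trans ((Submodule.quotEquivOfEq _ _ (by rw [h2])).trans q)⟩
        | cast i' =>
          obtain ⟨P', hP', hp', ⟨e⟩⟩ := hpieces i'
          refine ⟨P', hP', hp', ?_⟩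
          have h1 : g (Fin.castSucc i').succ = (f i'.succ).map S.subtype := by
            rw [Fin.succ_castSucc, hg, Fin.snoc_castSucc]
          have h2 : g (Fin.castSucc i').castSucc = (f i'.castSucc).map S.subtype := by
            rw [hg]
            rw [show (Fin.castSucc i').castSucc = Fin.castSucc (i'.castSucc) from rfl]
            rw [Fin.snoc_castSucc]
          obtain ⟨e2⟩ := sq_equiv (φ := S.subtype) (A := f i'.castSucc) (B := f i'.succ)
            (A' := (f i'.castSucc).map S.subtype) (B' := (f i'.succ).map S.subtype)
            (fun x hx => Submodule.mem_map_of_mem hx)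
            (by rintro y ⟨x, hx, rfl⟩; exact ⟨x, hx, by simp⟩)
            (by
              intro x hx
              constructor
              · intro h; exact Submodule.mem_map_of_mem h
              · rintro ⟨x', hx', hxx⟩
                rwa [show x' = x from Subtype.coe_injective hxx] at hx')
          have e3 : (↥(g (Fin.castSucc i').succ) ⧸
              Submodule.comap (g (Fin.castSucc i').succ).subtype (g (Fin.castSucc i').castSucc))
              ≃ₗ[R] (↥((f i'.succ).map S.subtype) ⧸
              Submodule.comap ((f i'.succ).map S.subtype).subtype ((f i'.castSucc).map S.subtype))
              := by rw [h1, h2]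
          exact ⟨(e3.trans e2.symm).trans e⟩

open Polynomial PolynomialModule

/-- A (not necessarily decreasing) `I`-stable sequence of submodules. -/
structure GFilt (I : Ideal R) (M : Type u) [AddCommGroup M] [Module R M] where
  N : ℕ → Submodule R M
  smul_le : ∀ n, I • N n ≤ N (n + 1)

namespace GFilt

variable {I : Ideal R} {M : Type u} [AddCommGroup M] [Module R M]

theorem pow_smul_le (D : GFilt I M) (i j : ℕ) : I ^ i • D.N j ≤ D.N (i + j) := by
  induction' i with _ ih
  · simp
  · rw [pow_succ', mul_smul, add_assoc, add_comm 1, ← add_assoc]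
    exact (smul_mono_right _ ih).trans (D.smul_le _)

/-- The associated `reesAlgebra I`-submodule of `M[X]`. -/
protected def submodule (D : GFilt I M) : Submodule (reesAlgebra I) (PolynomialModule R M) where
  carrier := { f | ∀ i, f.coeff i ∈ D.N i }
  add_mem' hf hg i := Submodule.add_mem _ (hf i) (hg i)
  zero_mem' _ := Submodule.zero_mem _
  smul_mem' r f hf i := by
    rw [Subalgebra.smul_def, PolynomialModule.smul_apply]
    apply Submodule.sum_mem
    rintro ⟨j, k⟩ e
    rw [Finset.HasAntidiagonal.mem_antidiagonal] at e
    subst e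
    exact D.pow_smul_le j k (Submodule.smul_mem_smul (r.2 j) (hf k))

theorem mem_submodule (D : GFilt I M) (f : PolynomialModule R M) :
    f ∈ D.submodule ↔ ∀ i, f.coeff i ∈ D.N i := Iff.rfl

end GFilt

/-- The `I`-adic filtration on `R`. -/
def adicG (I : Ideal R) : GFilt I R where
  N k := I ^ k
  smul_le k := Submodule.smul_le.mpr fun r hr x hx => by
    have h1 : r * x ∈ I ^ (k + 1) := by rw [pow_succ']; exact Ideal.mul_mem_mul hr hx
    simpa [smul_eq_mul] using h1

variable {I : Ideal R} {M : Type u} [AddCommGroup M] [Module R M]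

/-- The comparison map into the submodule lattice over the Rees algebra, relative to a
bounding filtration `T`. -/
noncomputable def phi (T : GFilt I M) (D : GFilt I M) :
    Submodule (reesAlgebra I) ↥T.submodule :=
  Submodule.comap T.submodule.subtype D.submodule

theorem phi_mono (T : GFilt I M) {D E : GFilt I M} (h : ∀ n, D.N n ≤ E.N n) :
    phi T D ≤ phi T E := by
  intro f hf
  exact (E.mem_submodule f.1).mpr fun i => h i ((D.mem_submodule f.1).mp hf i)

theorem phi_lt (T : GFilt I M) {D E : GFilt I M} (h : ∀ n, D.N n ≤ E.N n) {a : ℕ} {y : M}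
    (hyE : y ∈ E.N a) (hyD : y ∉ D.N a) (hyT : y ∈ T.N a) : phi T D < phi T E := by
  refine lt_of_le_of_ne (phi_mono T h) (fun heq => hyD ?_)
  have hsT : (single R a y : PolynomialModule R M) ∈ T.submodule := by
    rw [GFilt.mem_submodule]
    intro i
    rw [coeff_single, Finsupp.single_apply]
    split_ifs with hia
    · exact hia ▸ hyT
    · exact Submodule.zero_mem _
  have hsE : (⟨single R a y, hsT⟩ : ↥T.submodule) ∈ phi T E := by
    show (single R a y : PolynomialModule R M) ∈ E.submodule
    rw [GFilt.mem_submodule]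
    intro i
    rw [coeff_single, Finsupp.single_apply]
    split_ifs with hia
    · exact hia ▸ hyE
    · exact Submodule.zero_mem _
  rw [← heq] at hsE
  have := (D.mem_submodule _).mp (Submodule.mem_comap.mp hsE) a
  simpa [coeff_single] using this

theorem gfilt_wf (T : GFilt I M) [IsNoetherianRing R] (hT : T.submodule.FG) :
    WellFounded (fun D₁ D₂ : GFilt I M => phi T D₂ < phi T D₁) := by
  haveI : IsNoetherian (reesAlgebra I) ↥T.submodule := isNoetherian_of_fg_of_noetherian _ hT
  exact InvImage.wf (phi T) wellFounded_gt

/-- `J • span {y} = image of J under r ↦ r • y`. -/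
theorem ideal_smul_span_singleton (J : Ideal R) (y : M) :
    J • Submodule.span R {y} = Submodule.map (LinearMap.toSpanSingleton R M y) J := by
  apply le_antisymm
  · rw [Submodule.smul_le]
    rintro r hr m hm
    rw [Submodule.mem_span_singleton] at hm
    obtain ⟨c, rfl⟩ := hm
    refine ⟨c * r, J.mul_mem_left c hr, ?_⟩
    rw [LinearMap.toSpanSingleton_apply, mul_comm, mul_smul]
  · rintro _ ⟨r, hr, rfl⟩
    rw [LinearMap.toSpanSingleton_apply]
    exact Submodule.smul_mem_smul hr (Submodule.mem_span_singleton_self y)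

/-- The degreewise annihilator of `y`, shifted by `a`, relative to `D`. -/
def annSeq (D : GFilt I M) (a : ℕ) (y : M) : GFilt I R where
  N k := (I ^ k : Ideal R) ⊓ Submodule.comap (LinearMap.toSpanSingleton R M y) (D.N (a + k))
  smul_le k := Submodule.smul_le.mpr fun r hr x hx => by
    rw [Submodule.mem_inf, Submodule.mem_comap] at hx ⊢
    obtain ⟨hx1, hx2⟩ := hx
    constructor
    · have h1 : r * x ∈ I ^ (k + 1) := by rw [pow_succ']; exact Ideal.mul_mem_mul hr hx1
      simpa [smul_eq_mul] using h1
    · show (r • x) • y ∈ D.N (a + (k + 1))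
      rw [smul_eq_mul, mul_smul]
      have h1 : r • (x • y) ∈ I • D.N (a + k) := Submodule.smul_mem_smul hr hx2
      have h2 := D.smul_le (a + k) h1
      rwa [show a + k + 1 = a + (k + 1) by omega] at h2

theorem annSeq_le_adic (D : GFilt I M) (a : ℕ) (y : M) (k : ℕ) :
    (annSeq D a y).N k ≤ (I ^ k : Ideal R) := inf_le_left

theorem mem_annSeq (D : GFilt I M) (a : ℕ) (y : M) (k : ℕ) (r : R) :
    r ∈ (annSeq D a y).N k ↔ r ∈ (I ^ k : Ideal R) ∧ r • y ∈ D.N (a + k) := by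
  show r ∈ _ ⊓ _ ↔ _
  rw [Submodule.mem_inf, Submodule.mem_comap, LinearMap.toSpanSingleton_apply]

/-- Extension of `D` by the orbit of `y` placed in degree `a`. -/
def orbExt (D : GFilt I M) (a : ℕ) (y : M) : GFilt I M where
  N n := D.N n ⊔ (if a ≤ n then (I ^ (n - a) : Ideal R) • (Submodule.span R {y}) else ⊥)
  smul_le n := by
    rw [Submodule.smul_sup]
    apply sup_le_sup (D.smul_le n)
    by_cases h : a ≤ n
    · rw [if_pos h, if_pos (h.trans (Nat.le_succ n))]
      rw [show n + 1 - a = (n - a) + 1 by omega, pow_succ', mul_smul]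
    · rw [if_neg h]
      simp

theorem le_orbExt (D : GFilt I M) (a : ℕ) (y : M) (n : ℕ) : D.N n ≤ (orbExt D a y).N n :=
  le_sup_left

theorem orbExt_of_lt (D : GFilt I M) (a : ℕ) (y : M) {n : ℕ} (h : n < a) :
    (orbExt D a y).N n = D.N n := by
  show D.N n ⊔ _ = D.N n
  rw [if_neg (by omega), sup_bot_eq]

theorem mem_orbExt_self (D : GFilt I M) (a : ℕ) (y : M) : y ∈ (orbExt D a y).N a := by
  apply Submodule.mem_sup_right
  rw [if_pos le_rfl, Nat.sub_self, pow_zero, Ideal.one_eq_top, Submodule.top_smul]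
  exact Submodule.mem_span_singleton_self y

theorem orbExt_le (D : GFilt I M) {T : GFilt I M} (a : ℕ) {y : M} (hDT : ∀ n, D.N n ≤ T.N n)
    (hyT : y ∈ T.N a) (n : ℕ) : (orbExt D a y).N n ≤ T.N n := by
  apply sup_le (hDT n)
  by_cases h : a ≤ n
  · rw [if_pos h]
    have h1 : Submodule.span R {y} ≤ T.N a := by
      rwa [Submodule.span_singleton_le_iff_mem]
    have h2 : (I ^ (n - a) : Ideal R) • Submodule.span R {y} ≤ I ^ (n - a) • T.N a :=
      smul_mono_right _ h1
    refine h2.trans ?_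
    have := T.pow_smul_le (n - a) a
    rwa [Nat.sub_add_cancel h] at this
  · rw [if_neg h]
    exact bot_le

/-- The subquotient of degree `n` of the orbit extension is isomorphic to the
corresponding subquotient of the adic filtration by the annihilator sequence. -/
theorem orb_piece (D : GFilt I M) (a : ℕ) (y : M) (n : ℕ) (h : a ≤ n) :
    Nonempty ((↥((I ^ (n - a) : Ideal R) : Submodule R R) ⧸
        Submodule.comap ((I ^ (n - a) : Ideal R) : Submodule R R).subtype
          ((annSeq D a y).N (n - a))) ≃ₗ[R]
      (↥((orbExt D a y).N n) ⧸
        Submodule.comap ((orbExt D a y).N n).subtype (D.N n))) := by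
  apply sq_equiv (LinearMap.toSpanSingleton R M y)
  · intro r hr
    apply Submodule.mem_sup_right
    rw [if_pos h, LinearMap.toSpanSingleton_apply]
    exact Submodule.smul_mem_smul hr (Submodule.mem_span_singleton_self y)
  · intro z hz
    obtain ⟨u, hu, v, hv, rfl⟩ := Submodule.mem_sup.mp hz
    rw [if_pos h, ideal_smul_span_singleton] at hv
    obtain ⟨r, hr, rfl⟩ := hv
    exact ⟨r, hr, by simpa using hu⟩
  · intro r hr
    rw [mem_annSeq, Nat.add_sub_cancel' h]
    simp only [LinearMap.toSpanSingleton_apply]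
    exact ⟨fun hx => hx.2, fun hx => ⟨hr, hx⟩⟩

theorem ideal_smul_top (J : Ideal R) : J • (⊤ : Submodule R R) = J := by
  apply le_antisymm
  · rw [Submodule.smul_le]
    intro r hr x _
    simpa [smul_eq_mul] using J.mul_mem_right x hr
  · intro r hr
    have := Submodule.smul_mem_smul hr (Submodule.mem_top (R := R) (x := (1 : R)))
    simpa using this

theorem adicG_submodule_fg [IsNoetherianRing R] (I : Ideal R) : (adicG I).submodule.FG := by
  have heq : (adicG I).submodule = (I.stableFiltration (⊤ : Submodule R R)).submodule := by
    ext f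
    rw [GFilt.mem_submodule, Ideal.Filtration.mem_submodule]
    apply forall_congr'
    intro i
    rw [Ideal.stableFiltration_N, ideal_smul_top]
    exact Iff.rfl
  rw [heq]
  refine (Ideal.Filtration.submodule_fg_iff_stable _ ?_).mpr (I.stableFiltration_stable ⊤)
  intro i
  exact IsNoetherian.noetherian _



/-! ### The core dévissage over the adic filtration of `R` -/

section Core

variable [IsNoetherianRing R] (I : Ideal R)

theorem starR (Q : GFilt I R) (hQle : ∀ k, Q.N k ≤ (I ^ k : Ideal R)) :
    ∃ Λ : Set (Ideal R), Λ.Finite ∧ ∀ k,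
      Built R Λ (↥((I ^ k : Ideal R) : Submodule R R) ⧸
        Submodule.comap ((I ^ k : Ideal R) : Submodule R R).subtype (Q.N k)) := by
  have hwf := gfilt_wf (adicG I) (adicG_submodule_fg I)
  revert hQle
  refine WellFounded.induction hwf Q
    (C := fun Q => (∀ k, Q.N k ≤ (I ^ k : Ideal R)) →
      ∃ Λ : Set (Ideal R), Λ.Finite ∧ ∀ k,
        Built R Λ (↥((I ^ k : Ideal R) : Submodule R R) ⧸
          Submodule.comap ((I ^ k : Ideal R) : Submodule R R).subtype (Q.N k))) ?_
  clear Q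
  intro Q IH hQle
  by_cases hfull : ∀ k, ((I ^ k : Ideal R) : Submodule R R) ≤ Q.N k
  · exact ⟨∅, Set.finite_empty, fun k => built_sq_of_le (hfull k)⟩
  push_neg at hfull
  obtain ⟨b, hb⟩ := hfull
  rw [SetLike.not_le_iff_exists] at hb
  obtain ⟨z0, hz0I, hz0Q⟩ := hb
  haveI : IsNoetherian (reesAlgebra I) ↥(adicG I).submodule :=
    isNoetherian_of_fg_of_noetherian _ (adicG_submodule_fg I)
  set Cand : Set (Submodule (reesAlgebra I) ↥(adicG I).submodule) :=
    {W | ∃ (c : ℕ) (w : R), w ∈ (I ^ c : Ideal R) ∧ w ∉ Q.N c ∧ W = phi (adicG I) (annSeq Q c w)}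
    with hCand
  have hCne : Cand.Nonempty := ⟨_, b, z0, hz0I, hz0Q, rfl⟩
  obtain ⟨W, hWmem, hWmax⟩ := wellFounded_gt.has_min Cand hCne
  obtain ⟨a, y, hyI, hyQ, rfl⟩ := hWmem
  set P := annSeq Q a y with hPdef
  have hPle : ∀ k, P.N k ≤ (I ^ k : Ideal R) := annSeq_le_adic Q a y
  -- `Q ≤ P`
  have hQP : ∀ k, Q.N k ≤ P.N k := by
    intro k r hr
    rw [hPdef, mem_annSeq]
    refine ⟨hQle k hr, ?_⟩
    have h1 : y • r ∈ (I ^ a : Ideal R) • Q.N k := Submodule.smul_mem_smul hyI hr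
    have h2 := Q.pow_smul_le a k h1
    rwa [show y • r = r • y by rw [smul_eq_mul, smul_eq_mul, mul_comm]] at h2
  -- maximality of the annihilator sequence of `y`
  have hmax : ∀ (c : ℕ) (w : R), w ∈ (I ^ c : Ideal R) → w ∉ Q.N c →
      (∀ m, P.N m ≤ (annSeq Q c w).N m) → ∀ m, (annSeq Q c w).N m ≤ P.N m := by
    intro c w hwI hwQ hle m s hs
    by_contra hsP
    have hsI : s ∈ (I ^ m : Ideal R) := ((mem_annSeq Q c w m s).mp hs).1
    exact hWmax _ ⟨c, w, hwI, hwQ, rfl⟩ (phi_lt (adicG I) hle hs hsP hsI)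
  -- the key primality property
  have hkey : ∀ (j : ℕ) (r : R), r ∈ (I ^ j : Ideal R) → r • y ∉ Q.N (a + j) →
      ∀ (i : ℕ) (s : R), s ∈ (I ^ i : Ideal R) → s • (r • y) ∈ Q.N (a + j + i) →
        s ∈ P.N i := by
    intro j r hrI hrQ i s hsI hs
    have hryI : r • y ∈ (I ^ (a + j) : Ideal R) := by
      have h1 := Ideal.mul_mem_mul hrI hyI
      rw [← pow_add] at h1
      rw [show a + j = j + a by omega]
      rwa [show r * y = r • y by rw [smul_eq_mul]] at h1
    have hle : ∀ m, P.N m ≤ (annSeq Q (a + j) (r • y)).N m := by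
      intro m t ht
      rw [hPdef, mem_annSeq] at ht
      rw [mem_annSeq]
      refine ⟨ht.1, ?_⟩
      have h1 : r • (t • y) ∈ (I ^ j : Ideal R) • Q.N (a + m) := Submodule.smul_mem_smul hrI ht.2
      have h2 := Q.pow_smul_le j (a + m) h1
      rw [show a + j + m = j + (a + m) by omega, smul_comm t r y]
      exact h2
    have h3 := hmax (a + j) (r • y) hryI hrQ hle i
    apply h3
    rw [mem_annSeq]
    exact ⟨hsI, hs⟩
  -- `P.N 0` is prime
  have hP0 : ∀ r : R, r ∈ P.N 0 ↔ r • y ∈ Q.N a := by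
    intro r
    rw [hPdef, mem_annSeq]
    constructor
    · intro h; simpa using h.2
    · intro h; exact ⟨by simp, by simpa using h⟩
  have hprime : Ideal.IsPrime (P.N 0 : Ideal R) := by
    rw [Ideal.isPrime_iff]
    constructor
    · intro htop
      have h1 : (1 : R) ∈ P.N 0 := htop ▸ Submodule.mem_top
      rw [hP0] at h1
      exact hyQ (by simpa using h1)
    · intro r s hrs
      by_cases hr : r ∈ P.N 0
      · exact Or.inl hr
      · right
        have hrQ : r • y ∉ Q.N (a + 0) := by
          rw [hP0] at hr
          simpa using hr
        have hkey0 := hkey 0 r (by simp) hrQ 0 s (by simp)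
        apply hkey0
        have h1 : (r * s) • y ∈ Q.N a := (hP0 _).mp hrs
        have heq : s • (r • y) = (r * s) • y := by rw [mul_comm, mul_smul]
        rw [heq]
        simpa using h1
  -- the subclaim: the pieces of `P` itself are built
  have hSC : ∃ Λ₂ : Set (Ideal R), Λ₂.Finite ∧ ∀ j,
      Built R Λ₂ (↥((I ^ j : Ideal R) : Submodule R R) ⧸
        Submodule.comap ((I ^ j : Ideal R) : Submodule R R).subtype (P.N j)) := by
    by_cases hx : ∀ x ∈ I, x ∈ P.N 1
    · refine ⟨{P.N 0}, Set.finite_singleton _, fun j => ?_⟩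
      cases j with
      | zero =>
        obtain ⟨e⟩ := sq_top_equiv (A := (P.N 0 : Submodule R R))
          (B := ((I ^ 0 : Ideal R) : Submodule R R)) (by rw [pow_zero, Ideal.one_eq_top])
        exact (built_quot_prime (Set.mem_singleton _) hprime).congr e.symm
      | succ j =>
        apply built_sq_of_le
        have h1 : (I : Submodule R R) ≤ P.N 1 := fun t ht => hx t ht
        have h2 : (I ^ (j + 1) : Ideal R) = I ^ j • (I : Ideal R) := by
          rw [Ideal.smul_eq_mul, pow_succ]
        rw [h2]
        exact (smul_mono_right _ h1).trans (P.pow_smul_le j 1)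
    · push_neg at hx
      obtain ⟨x, hxI, hxP1⟩ := hx
      set P' := orbExt P 1 x with hP'def
      have hx1 : x ∈ (I ^ 1 : Ideal R) := by rwa [pow_one]
      have hP'le : ∀ k, P'.N k ≤ (I ^ k : Ideal R) := orbExt_le P 1 (T := adicG I) hPle hx1
      have hrel : phi (adicG I) Q < phi (adicG I) P' :=
        lt_of_le_of_lt (phi_mono (adicG I) hQP)
          (phi_lt (adicG I) (le_orbExt P 1 x) (mem_orbExt_self P 1 x) hxP1 hx1)
      obtain ⟨Λ₃, hfin3, hpieces3⟩ := IH P' hrel hP'le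
      have hxyQ : x • y ∉ Q.N (a + 1) := by
        intro hcon
        apply hxP1
        rw [hPdef, mem_annSeq]
        exact ⟨hx1, hcon⟩
      have hann : ∀ k, (annSeq P 1 x).N k = P.N k := by
        intro k
        ext r
        rw [mem_annSeq]
        constructor
        · rintro ⟨hrI, hrx⟩
          rw [hPdef, mem_annSeq] at hrx
          refine hkey 1 x hx1 hxyQ k r hrI ?_
          have h1 := hrx.2
          rwa [show a + (1 + k) = a + 1 + k by omega, smul_assoc] at h1
        · intro hr
          refine ⟨hPle k hr, ?_⟩
          have h1 : x • r ∈ I • P.N k := Submodule.smul_mem_smul hxI hr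
          have h2 := P.smul_le k h1
          rwa [show x • r = r • x by rw [smul_eq_mul, smul_eq_mul, mul_comm],
            show k + 1 = 1 + k by omega] at h2
      refine ⟨{P.N 0} ∪ Λ₃, (Set.finite_singleton _).union hfin3, fun j => ?_⟩
      induction j with
      | zero =>
        obtain ⟨e⟩ := sq_top_equiv (A := (P.N 0 : Submodule R R))
          (B := ((I ^ 0 : Ideal R) : Submodule R R)) (by rw [pow_zero, Ideal.one_eq_top])
        exact ((built_quot_prime (Set.mem_singleton _) hprime).congr e.symm).mono
          Set.subset_union_left
      | succ j ihj =>
        apply Built.mono (show (({P.N 0} ∪ Λ₃) ∪ Λ₃ : Set (Ideal R)) ⊆ {P.N 0} ∪ Λ₃ by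
          rw [Set.union_assoc, Set.union_self])
        refine built_sq_step (A := (P.N (j + 1) : Submodule R R)) (B₁ := P'.N (j + 1))
          (B₂ := ((I ^ (j + 1) : Ideal R) : Submodule R R)) (le_orbExt P 1 x (j + 1))
          (hP'le (j + 1)) ?_ (hpieces3 (j + 1))
        obtain ⟨e⟩ := orb_piece P 1 x (j + 1) (by omega)
        have ihj' : Built R ({P.N 0} ∪ Λ₃)
            (↥((I ^ ((j + 1) - 1) : Ideal R) : Submodule R R) ⧸
              Submodule.comap ((I ^ ((j + 1) - 1) : Ideal R) : Submodule R R).subtype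
                ((annSeq P 1 x).N ((j + 1) - 1))) := by
          rw [show (j + 1) - 1 = j from rfl, hann j]
          exact ihj
        exact ihj'.congr e
  obtain ⟨Λ₂, hfin2, hSCp⟩ := hSC
  set D' := orbExt Q a y with hD'def
  have hD'le : ∀ k, D'.N k ≤ (I ^ k : Ideal R) := orbExt_le Q a (T := adicG I) hQle hyI
  have hrelD : phi (adicG I) Q < phi (adicG I) D' :=
    phi_lt (adicG I) (le_orbExt Q a y) (mem_orbExt_self Q a y) hyQ hyI
  obtain ⟨Λ₁, hfin1, hpieces1⟩ := IH D' hrelD hD'le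
  refine ⟨Λ₂ ∪ Λ₁, hfin2.union hfin1, fun k => ?_⟩
  refine built_sq_step (A := (Q.N k : Submodule R R)) (B₁ := D'.N k)
    (B₂ := ((I ^ k : Ideal R) : Submodule R R)) (le_orbExt Q a y k) (hD'le k) ?_ (hpieces1 k)
  by_cases hak : a ≤ k
  · obtain ⟨e⟩ := orb_piece Q a y k hak
    exact (hSCp (k - a)).congr e
  · exact built_sq_of_le (le_of_eq (orbExt_of_lt Q a y (by omega)))

variable {M : Type u} [AddCommGroup M] [Module R M]

theorem starM (T : GFilt I M) (hT : T.submodule.FG) (D E : GFilt I M)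
    (hET : ∀ n, E.N n ≤ T.N n) (hDE : ∀ n, D.N n ≤ E.N n) :
    ∃ Λ : Set (Ideal R), Λ.Finite ∧ ∀ n,
      Built R Λ (↥(E.N n) ⧸ Submodule.comap (E.N n).subtype (D.N n)) := by
  have hwf := gfilt_wf T hT
  revert E
  refine WellFounded.induction hwf D
    (C := fun D => ∀ E : GFilt I M, (∀ n, E.N n ≤ T.N n) → (∀ n, D.N n ≤ E.N n) →
      ∃ Λ : Set (Ideal R), Λ.Finite ∧ ∀ n,
        Built R Λ (↥(E.N n) ⧸ Submodule.comap (E.N n).subtype (D.N n))) ?_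
  clear D
  intro D IH E hET hDE
  by_cases hfull : ∀ n, E.N n ≤ D.N n
  · exact ⟨∅, Set.finite_empty, fun n => built_sq_of_le (hfull n)⟩
  push_neg at hfull
  obtain ⟨a, ha⟩ := hfull
  rw [SetLike.not_le_iff_exists] at ha
  obtain ⟨y, hyE, hyD⟩ := ha
  obtain ⟨Λ₂, hfin2, hSCp⟩ := starR I (annSeq D a y) (annSeq_le_adic D a y)
  set D' := orbExt D a y with hD'def
  have hD'E : ∀ n, D'.N n ≤ E.N n := orbExt_le D a (T := E) hDE hyE
  have hrel : phi T D < phi T D' :=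
    phi_lt T (le_orbExt D a y) (mem_orbExt_self D a y) hyD (hET a hyE)
  obtain ⟨Λ₁, hfin1, hpieces1⟩ := IH D' hrel E hET hD'E
  refine ⟨Λ₂ ∪ Λ₁, hfin2.union hfin1, fun n => ?_⟩
  refine built_sq_step (A := D.N n) (B₁ := D'.N n) (B₂ := E.N n) (le_orbExt D a y n)
    (hD'E n) ?_ (hpieces1 n)
  by_cases han : a ≤ n
  · obtain ⟨e⟩ := orb_piece D a y n han
    exact (hSCp (n - a)).congr e
  · exact built_sq_of_le (le_of_eq (orbExt_of_lt D a y (by omega)))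

end Core

theorem hpf_of_built {Λ : Set (Ideal R)} {M : Type u} [AddCommGroup M] [Module R M]
    (h : Built R Λ M) : HasPrimeFiltrationIn R M Λ := by
  obtain ⟨n, hn⟩ := h
  exact hpf_of_builtN n M Λ hn

end PFilt

/-- Let `R` be Noetherian, `I` an ideal, and `M` an `I`-filtered module
(`M₀ = M`, `I Mₙ ⊆ Mₙ₊₁`, `⊕ₙ Mₙ` finitely generated over the Rees ring `⊕ₙ Iⁿ`).  Then
there is a finite set `Λ` of prime ideals of `R` such that for every `n`, the quotient
`M/Mₙ` admits a prime filtration all of whose prime factors belong to `Λ`. -/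
theorem exists_finite_primeFiltration_filtration {R M : Type u} [CommRing R]
    [IsNoetherianRing R] [AddCommGroup M] [Module R M] [Module.Finite R M]
    (I : Ideal R) (F : I.Filtration M) (hF0 : F.N 0 = ⊤) (hFG : F.submodule.FG) :
    ∃ Λ : Set (Ideal R), Λ.Finite ∧
      ∀ n : ℕ, HasPrimeFiltrationIn R (M ⧸ F.N n) Λ := by
  classical
  have hTFfg : (PFilt.GFilt.submodule (⟨F.N, F.smul_le⟩ : PFilt.GFilt I M)).FG := by
    have heq : PFilt.GFilt.submodule (⟨F.N, F.smul_le⟩ : PFilt.GFilt I M) = F.submodule := by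
      ext f
      rw [PFilt.GFilt.mem_submodule, Ideal.Filtration.mem_submodule]
    rw [heq]
    exact hFG
  obtain ⟨Λ, hfin, hpieces⟩ := PFilt.starM I (⟨F.N, F.smul_le⟩ : PFilt.GFilt I M) hTFfg
    (⟨fun n => F.N (n + 1), fun n => F.smul_le (n + 1)⟩ : PFilt.GFilt I M)
    (⟨F.N, F.smul_le⟩ : PFilt.GFilt I M) (fun n => le_rfl) (fun n => F.mono n)
  have hchain : ∀ n j, PFilt.Built R Λ
      (↥(F.N (n - j)) ⧸ Submodule.comap (F.N (n - j)).subtype (F.N n)) := by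
    intro n j
    induction j with
    | zero =>
      rw [Nat.sub_zero]
      exact PFilt.built_sq_of_le le_rfl
    | succ j ihj =>
      by_cases h : n ≤ j
      · rw [show n - (j + 1) = n - j by omega]
        exact ihj
      · have hm : n - j = (n - (j + 1)) + 1 := by omega
        apply PFilt.Built.mono (show (Λ ∪ Λ : Set (Ideal R)) ⊆ Λ by rw [Set.union_self])
        refine PFilt.built_sq_step (A := F.N n) (B₁ := F.N (n - j)) (B₂ := F.N (n - (j + 1)))
          (F.antitone (show n - j ≤ n by omega))
          (F.antitone (show n - (j + 1) ≤ n - j by omega)) ihj ?_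
        rw [hm]
        exact hpieces (n - (j + 1))
  refine ⟨Λ, hfin, fun n => ?_⟩
  have h1 := hchain n n
  rw [Nat.sub_self] at h1
  obtain ⟨e⟩ := PFilt.sq_top_equiv (R := R) (A := F.N n) (B := F.N 0) hF0
  exact PFilt.hpf_of_built (h1.congr e)
end

section
/- Let $R$ be a Noetherian ring and $I$ an ideal of $R$. Then the union over all $n \geq 1$ of the sets of associated primes of $R/I^n$ is a finite set. -/
set_option synthInstance.maxHeartbeats 1000000
set_option maxHeartbeats 1000000

open Polynomial

section L1

variable {R : Type*} [CommRing R] {M : Type*} [AddCommGroup M] [Module R M]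

theorem ass_le_union (N : Submodule R M) :
    associatedPrimes R M ⊆ associatedPrimes R N ∪ associatedPrimes R (M ⧸ N) := by
  exact associatedPrimes.subset_union_of_exact N.injective_subtype (LinearMap.exact_subtype_mkQ N)

end L1

section L2
variable {R : Type*} [CommRing R]

theorem ass_quot_inf (A B : Ideal R) :
    associatedPrimes R (R ⧸ (A ⊓ B)) ⊆
      associatedPrimes R (R ⧸ A) ∪ associatedPrimes R (R ⧸ B) := by
  set J : Ideal R := A ⊓ B
  set N : Submodule R (R ⧸ J) := Submodule.map J.mkQ A
  have h1 : associatedPrimes R (R ⧸ J) ⊆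
      associatedPrimes R N ∪ associatedPrimes R ((R ⧸ J) ⧸ N) := ass_le_union N
  have e : ((R ⧸ J) ⧸ N) ≃ₗ[R] R ⧸ A :=
    Submodule.quotientQuotientEquivQuotient J A inf_le_left
  have h2 : associatedPrimes R ((R ⧸ J) ⧸ N) = associatedPrimes R (R ⧸ A) :=
    LinearEquiv.AssociatedPrimes.eq e
  -- N embeds into R ⧸ B
  have h3 : associatedPrimes R N ⊆ associatedPrimes R (R ⧸ B) := by
    set f : (R ⧸ J) →ₗ[R] R ⧸ B := J.liftQ B.mkQ (by
      intro x hx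
      simpa using hx.2)
    apply associatedPrimes.subset_of_injective (f := f.domRestrict N)
    rintro ⟨x, hx⟩ ⟨y, hy⟩ hxy
    obtain ⟨a, haA, rfl⟩ := hx
    obtain ⟨b, hbA, rfl⟩ := hy
    simp only [LinearMap.domRestrict_apply, f] at hxy
    rw [Submodule.mkQ_apply, Submodule.mkQ_apply, Submodule.liftQ_apply, Submodule.liftQ_apply]
      at hxy
    have hab : a - b ∈ B := by
      rwa [Submodule.mkQ_apply, Submodule.mkQ_apply, Submodule.Quotient.eq] at hxy
    have : a - b ∈ J := ⟨A.sub_mem haA hbA, hab⟩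
    ext
    exact (Submodule.Quotient.eq _).mpr this
  intro p hp
  rcases h1 hp with h | h
  · right; exact h3 h
  · left; exact h2 ▸ h

end L2

section L3
variable {R : Type*} [CommRing R]

theorem ass_quot_finset (s : Finset (Ideal R)) :
    associatedPrimes R (R ⧸ (s.inf id)) ⊆ ⋃ Q ∈ s, associatedPrimes R (R ⧸ Q) := by
  classical
  induction s using Finset.induction_on with
  | empty =>
    intro p hp
    rw [Finset.inf_empty] at hp
    have : Subsingleton (R ⧸ (⊤ : Ideal R)) := Submodule.Quotient.subsingleton_iff.mpr rfl
    rw [associatedPrimes.eq_empty_of_subsingleton] at hp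
    exact absurd hp (Set.notMem_empty p)
  | insert Q s hQ ih =>
    rw [Finset.inf_insert]
    intro p hp
    rcases ass_quot_inf (id Q) (s.inf id) hp with h | h
    · exact Set.mem_biUnion (s.mem_insert_self Q) h
    · obtain ⟨q, hq, hmem⟩ := Set.mem_iUnion₂.mp (ih h)
      exact Set.mem_biUnion (Finset.mem_insert_of_mem hq) hmem

theorem ass_quot_finite [IsNoetherianRing R] (J : Ideal R) :
    (associatedPrimes R (R ⧸ J)).Finite := by
  obtain ⟨s, hs, hs'⟩ := Submodule.isLasker R R J
  have := ass_quot_finset s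
  rw [hs] at this
  refine Set.Finite.subset ?_ this
  apply Set.Finite.biUnion s.finite_toSet
  intro Q hQ
  rw [associatedPrimes.eq_singleton_of_isPrimary (hs' (Finset.mem_coe.mp hQ))]
  exact Set.finite_singleton _

end L3

section L4

variable {R : Type*} [CommRing R] {M : Type*} [AddCommGroup M] [Module R M]

theorem ass_comap {S : Type*} [CommRing S] [Algebra R S] [IsNoetherianRing S] [IsNoetherianRing R]
    [Module S M] [IsScalarTower R S M] :
    associatedPrimes R M ⊆ (fun P => P.comap (algebraMap R S)) '' associatedPrimes S M := by
  intro p hp'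
  obtain ⟨hp, x, hx⟩ := isAssociatedPrime_iff.mp hp'
  have hxm : ∀ r : R, r • x = 0 ↔ r ∈ p := by
    intro r; rw [hx, Submodule.mem_colon_singleton, Submodule.mem_bot]
  have hsc : ∀ (r : R) (m : M), r • m = (algebraMap R S r) • m := fun r m =>
    (algebraMap_smul S r m).symm
  have hann : ∀ (z : M) (s : S), s ∈ (Submodule.span S {z}).annihilator ↔ s • z = 0 :=
    fun z s => Submodule.mem_annihilator_span_singleton z s
  set 𝒮 : Set (Ideal S) :=
    {P | ∃ y : M, y ∈ Submodule.span S {x} ∧ P = (Submodule.span S {y}).annihilator ∧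
      ∀ r : R, r ∉ p → r • y ≠ 0} with h𝒮
  have hx𝒮 : (Submodule.span S {x}).annihilator ∈ 𝒮 :=
    ⟨x, Submodule.mem_span_singleton_self x, rfl, fun r hr h0 => hr ((hxm r).mp h0)⟩
  obtain ⟨P, ⟨y, hyspan, hPy, hy⟩, hmax⟩ :=
    set_has_maximal_iff_noetherian.mpr (inferInstance : IsNoetherian S S) 𝒮 ⟨_, hx𝒮⟩
  have hone : (1 : R) ∉ p := fun h => hp.ne_top ((Ideal.eq_top_iff_one p).mpr h)
  have hy0 : y ≠ 0 := by
    intro h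
    exact hy 1 hone (by rw [h, smul_zero])
  have hpy : ∀ r : R, r ∈ p → r • y = 0 := by
    intro r hr
    obtain ⟨s, rfl⟩ := Submodule.mem_span_singleton.mp hyspan
    rw [hsc, smul_smul, mul_comm, ← smul_smul, ← hsc, (hxm r).mpr hr, smul_zero]
  have hstep : ∀ t : R, t ∉ p → (Submodule.span S {t • y}).annihilator = P := by
    intro t ht
    have hmem : (Submodule.span S {t • y}).annihilator ∈ 𝒮 := by
      refine ⟨t • y, by rw [hsc]; exact Submodule.smul_mem _ _ hyspan, rfl, ?_⟩
      intro r hr h0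
      rw [smul_smul] at h0
      exact hy (r * t) (fun hm => ((hp.mul_mem_iff_mem_or_mem.mp hm).elim hr ht)) h0
    have hle : P ≤ (Submodule.span S {t • y}).annihilator := by
      intro s hs
      rw [hann]
      rw [hPy, hann] at hs
      rw [hsc, smul_comm, ← hsc, hs, smul_zero]
    exact (hle.eq_of_not_lt (hmax _ hmem)).symm
  refine ⟨P, isAssociatedPrime_iff.mpr ⟨?_, y, by
    rw [hPy]; ext s; rw [hann, Submodule.mem_colon_singleton, Submodule.mem_bot]⟩, ?_⟩
  · constructor
    · rw [Ne, Ideal.eq_top_iff_one, hPy, hann, one_smul]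
      exact hy0
    · intro a b hab
      rw [or_iff_not_imp_left]
      intro haP
      have hay : a • y ≠ 0 := fun h0 => haP (hPy ▸ (hann y a).mpr h0)
      have hmem : (Submodule.span S {a • y}).annihilator ∈ 𝒮 := by
        refine ⟨a • y, Submodule.smul_mem _ _ hyspan, rfl, ?_⟩
        intro r hr h0
        apply haP
        rw [← hstep r hr, hann]
        rw [hsc] at h0 ⊢
        rwa [smul_comm] at h0
      have hle : P ≤ (Submodule.span S {a • y}).annihilator := by
        intro s hs
        rw [hPy, hann] at hs
        rw [hann, smul_comm, hs, smul_zero]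
      have heq : P = (Submodule.span S {a • y}).annihilator :=
        hle.eq_of_not_lt (hmax _ hmem)
      rw [heq, hann, smul_smul, mul_comm]
      rw [hPy, hann] at hab
      exact hab
  · ext r
    rw [Ideal.mem_comap, hPy, hann, ← hsc]
    exact ⟨fun h0 => by_contra fun hr => hy r hr h0, hpy r⟩

end L4

section L5
variable {R : Type*} [CommRing R] (I : Ideal R)

/-- The ideal of the Rees algebra of elements all of whose coefficients lie in `I^(k+1)`. -/
def reesK : Ideal (reesAlgebra I) where
  carrier := {f | ∀ k, (f : R[X]).coeff k ∈ I ^ (k + 1)}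
  add_mem' := by
    intro f g hf hg k
    simpa [coeff_add] using Ideal.add_mem _ (hf k) (hg k)
  zero_mem' := by intro k; simp
  smul_mem' := by
    intro s f hf k
    show ((s * f : reesAlgebra I) : R[X]).coeff k ∈ I ^ (k + 1)
    have : ((s * f : reesAlgebra I) : R[X]) = (s : R[X]) * (f : R[X]) := rfl
    rw [this, coeff_mul]
    apply Ideal.sum_mem
    rintro ⟨i, j⟩ e
    have hij : i + j = k := Finset.HasAntidiagonal.mem_antidiagonal.mp e
    have h1 : (s : R[X]).coeff i ∈ I ^ i := s.2 i
    have h2 : (f : R[X]).coeff j ∈ I ^ (j + 1) := hf j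
    have : I ^ (k + 1) = I ^ i * I ^ (j + 1) := by rw [← pow_add, ← hij]; ring_nf
    rw [this]
    exact Ideal.mul_mem_mul h1 h2

theorem rees_map_le_reesK : Ideal.map (algebraMap R (reesAlgebra I)) I ≤ reesK I := by
  rw [Ideal.map_le_iff_le_comap]
  intro b hb
  intro k
  show ((algebraMap R (reesAlgebra I) b : reesAlgebra I) : R[X]).coeff k ∈ I ^ (k + 1)
  have : ((algebraMap R (reesAlgebra I) b : reesAlgebra I) : R[X]) = C b := rfl
  rw [this, coeff_C]
  split_ifs with h
  · subst h; simpa using hb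
  · exact Ideal.zero_mem _

theorem rees_monomial_mem_iff (n : ℕ) (a : R) (ha : a ∈ I ^ n) :
    (⟨monomial n a, reesAlgebra.monomial_mem.mpr ha⟩ : reesAlgebra I) ∈
      Ideal.map (algebraMap R (reesAlgebra I)) I ↔ a ∈ I ^ (n + 1) := by
  constructor
  · intro h
    have := rees_map_le_reesK I h n
    simpa [coeff_monomial] using this
  · intro h
    have h' : a ∈ I * I ^ n := by rwa [mul_comm, ← pow_succ]
    show (⟨monomial n a, reesAlgebra.monomial_mem.mpr (Ideal.mul_le_right (I := I) h')⟩ :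
      reesAlgebra I) ∈ Ideal.map (algebraMap R (reesAlgebra I)) I
    refine Submodule.mul_induction_on' (C := fun r hr =>
      (⟨monomial n r, reesAlgebra.monomial_mem.mpr (Ideal.mul_le_right (I := I) hr)⟩ :
        reesAlgebra I) ∈ Ideal.map (algebraMap R (reesAlgebra I)) I) ?_ ?_ h'
    · intro b hb c hc
      have key : (⟨monomial n (b * c), reesAlgebra.monomial_mem.mpr
          (Ideal.mul_le_right (I := I) (Ideal.mul_mem_mul hb hc))⟩ : reesAlgebra I) =
          algebraMap R (reesAlgebra I) b * ⟨monomial n c, reesAlgebra.monomial_mem.mpr hc⟩ := by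
        apply Subtype.ext
        show (monomial n (b * c) : R[X]) = C b * monomial n c
        rw [C_mul_monomial]
      rw [key]
      exact Ideal.mul_mem_right _ _ (Ideal.mem_map_of_mem _ hb)
    · intro x hx y hy hx' hy'
      have key : (⟨monomial n (x + y), reesAlgebra.monomial_mem.mpr
          (Ideal.mul_le_right (I := I) (add_mem hx hy))⟩ : reesAlgebra I) =
          ⟨monomial n x, reesAlgebra.monomial_mem.mpr (Ideal.mul_le_right (I := I) hx)⟩ +
          ⟨monomial n y, reesAlgebra.monomial_mem.mpr (Ideal.mul_le_right (I := I) hy)⟩ := by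
        apply Subtype.ext
        show (monomial n (x + y) : R[X]) = monomial n x + monomial n y
        rw [map_add]
      rw [key]
      exact Ideal.add_mem _ hx' hy'

end L5

section L6

variable {R : Type*} [CommRing R] (I : Ideal R)

/-- The canonical `R`-linear map `Iⁿ → S/IS` sending `a` to the class of `a Xⁿ`. -/
noncomputable def reesBeta (n : ℕ) :
    ↥(I ^ n) →ₗ[R] (reesAlgebra I ⧸ Ideal.map (algebraMap R (reesAlgebra I)) I) where
  toFun a := Submodule.Quotient.mk ⟨monomial n a.1, reesAlgebra.monomial_mem.mpr a.2⟩
  map_add' a b := by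
    show Submodule.Quotient.mk _ = Submodule.Quotient.mk _ + Submodule.Quotient.mk _
    rw [← Submodule.Quotient.mk_add]
    exact congrArg Submodule.Quotient.mk (Subtype.ext (by
      show (monomial n (a.1 + b.1) : R[X]) = monomial n a.1 + monomial n b.1
      rw [map_add]))
  map_smul' r a := by
    simp only [RingHom.id_apply]
    show Submodule.Quotient.mk _ = r • Submodule.Quotient.mk _
    rw [← Submodule.Quotient.mk_smul]
    exact congrArg Submodule.Quotient.mk (Subtype.ext (by
      show (monomial n (r • a.1) : R[X]) = r • (monomial n a.1 : R[X])
      rw [map_smul]))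

theorem reesBeta_ker (n : ℕ) :
    LinearMap.ker (reesBeta I n) =
      LinearMap.ker ((Submodule.mkQ (I ^ (n+1))).comp (Submodule.subtype (I ^ n))) := by
  ext a
  simp only [LinearMap.mem_ker, LinearMap.comp_apply, Submodule.subtype_apply,
    Submodule.mkQ_apply, Submodule.Quotient.mk_eq_zero]
  show Submodule.Quotient.mk _ = 0 ↔ _
  rw [Submodule.Quotient.mk_eq_zero]
  exact rees_monomial_mem_iff I n a.1 a.2

theorem ass_step [IsNoetherianRing R] (n : ℕ) :
    associatedPrimes R (R ⧸ I ^ (n+1)) ⊆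
      associatedPrimes R (R ⧸ I ^ n) ∪
      ((fun P => P.comap (algebraMap R (reesAlgebra I))) ''
        associatedPrimes (reesAlgebra I)
          (reesAlgebra I ⧸ Ideal.map (algebraMap R (reesAlgebra I)) I)) := by
  set J := Ideal.map (algebraMap R (reesAlgebra I)) I with hJ
  set N : Submodule R (R ⧸ I ^ (n+1)) := Submodule.map (Submodule.mkQ (I ^ (n+1))) (I ^ n) with hN
  have h1 := ass_le_union N
  have e1 : (((R ⧸ I ^ (n+1)) ⧸ N)) ≃ₗ[R] R ⧸ I ^ n :=
    Submodule.quotientQuotientEquivQuotient _ _ (Ideal.pow_le_pow_right (by omega))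
  set g := (Submodule.mkQ (I ^ (n+1))).comp (Submodule.subtype (I ^ n)) with hg
  have hrange : LinearMap.range g = N := by
    rw [hg, LinearMap.range_comp, Submodule.range_subtype]
  have hNass : associatedPrimes R N ⊆ associatedPrimes R (reesAlgebra I ⧸ J) := by
    have e2 : N ≃ₗ[R] (↥(I ^ n) ⧸ LinearMap.ker (reesBeta I n)) :=
      (LinearEquiv.ofEq _ _ hrange.symm).trans <|
        (LinearMap.quotKerEquivRange g).symm.trans <|
          Submodule.quotEquivOfEq _ _ (reesBeta_ker I n).symm
    have e3 : (↥(I ^ n) ⧸ LinearMap.ker (reesBeta I n)) ≃ₗ[R]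
        LinearMap.range (reesBeta I n) := LinearMap.quotKerEquivRange (reesBeta I n)
    rw [LinearEquiv.AssociatedPrimes.eq (e2.trans e3)]
    exact associatedPrimes.subset_of_injective (Submodule.injective_subtype _)
  intro p hp
  rcases h1 hp with h | h
  · right
    exact ass_comap (S := reesAlgebra I) (hNass h)
  · left
    rwa [LinearEquiv.AssociatedPrimes.eq e1] at h

theorem finite_iUnion_associatedPrimes_quotient_powers' {R : Type*} [CommRing R]
    [IsNoetherianRing R] (I : Ideal R) :
    (⋃ n ∈ {n : ℕ | 1 ≤ n}, associatedPrimes R (R ⧸ I ^ n)).Finite := by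
  set T := ((fun P => P.comap (algebraMap R (reesAlgebra I))) ''
        associatedPrimes (reesAlgebra I)
          (reesAlgebra I ⧸ Ideal.map (algebraMap R (reesAlgebra I)) I)) with hT
  have hTfin : T.Finite := Set.Finite.image _ (ass_quot_finite _)
  have key : ∀ n : ℕ, associatedPrimes R (R ⧸ I ^ n) ⊆ T := by
    intro n
    induction n with
    | zero =>
      intro p hp
      rw [pow_zero, Ideal.one_eq_top] at hp
      have : Subsingleton (R ⧸ (⊤ : Ideal R)) :=
        Submodule.Quotient.subsingleton_iff.mpr rfl
      rw [associatedPrimes.eq_empty_of_subsingleton] at hp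
      exact absurd hp (Set.notMem_empty p)
    | succ n ih =>
      intro p hp
      rcases ass_step I n hp with h | h
      · exact ih h
      · exact h
  apply Set.Finite.subset hTfin
  apply Set.iUnion₂_subset
  intro n _
  exact key n

end L6

/-- **Ratliff.** Let `R` be a Noetherian ring and `I` an ideal of `R`.
Then the union over all `n ≥ 1` of the sets of associated primes of `R/Iⁿ` is finite. -/
theorem finite_iUnion_associatedPrimes_quotient_powers {R : Type*} [CommRing R]
    [IsNoetherianRing R] (I : Ideal R) :
    (⋃ n ∈ {n : ℕ | 1 ≤ n}, associatedPrimes R (R ⧸ I ^ n)).Finite :=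
  finite_iUnion_associatedPrimes_quotient_powers' I
end

section
/- Let $R$ be a Noetherian ring, $I$ an ideal, and $M$ an $I$-filtered module. Then there exist an integer $m \geq 1$, an element $x \in I^m$, and an integer $c$ such that for all $n \geq c$, $(M_{n+m} :_M x) \cap M_c = M_n$ (i.e. $x$ is a superficial element for $M$ of order $m$). -/
universe u

section AssFinite


open Submodule

variable {S : Type*} [CommRing S] {M : Type*} [AddCommGroup M] [Module S M]

theorem ass_finite_quot [IsNoetherianRing S] [IsNoetherian S M] :
    ∀ K : Submodule S M, (associatedPrimes S (M ⧸ K)).Finite := by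
  intro K
  induction K using WellFoundedGT.induction with
  | _ K IH =>
  by_cases hs : Subsingleton (M ⧸ K)
  · rw [associatedPrimes.eq_empty_of_subsingleton]; exact Set.finite_empty
  · have : Nontrivial (M ⧸ K) := not_subsingleton_iff_nontrivial.mp hs
    obtain ⟨P, hP⟩ := associatedPrimes.nonempty S (M ⧸ K)
    obtain ⟨hPp, xb, hxb⟩ := isAssociatedPrime_iff.mp (AssociatedPrimes.mem_iff.mp hP)
    rw [Submodule.bot_colon'] at hxb
    have hxb0 : xb ≠ 0 := by
      rintro rfl
      rw [Submodule.span_singleton_eq_bot.mpr rfl, Submodule.annihilator_bot] at hxb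
      exact hPp.ne_top hxb
    obtain ⟨x, rfl⟩ := Submodule.mkQ_surjective K xb
    set K' : Submodule S M := Submodule.comap K.mkQ (S ∙ (K.mkQ x)) with hK'
    have hKK' : K < K' := by
      refine lt_of_le_of_ne (fun y hy => ?_) (fun h => ?_)
      · simp only [hK', Submodule.mem_comap]
        have h0 : K.mkQ y = 0 := by
          rwa [Submodule.mkQ_apply, Submodule.Quotient.mk_eq_zero]
        rw [h0]; exact zero_mem _
      · apply hxb0
        have : x ∈ K' := Submodule.mem_comap.mpr (Submodule.mem_span_singleton_self _)
        rw [← h] at this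
        exact (Submodule.Quotient.mk_eq_zero K).mpr this
    have hsub : associatedPrimes S (M ⧸ K) ⊆ insert P (associatedPrimes S (M ⧸ K')) := by
      rintro Q hQ
      obtain ⟨hQp, yb, hyb⟩ := isAssociatedPrime_iff.mp (AssociatedPrimes.mem_iff.mp hQ)
      rw [Submodule.bot_colon'] at hyb
      obtain ⟨y, rfl⟩ := Submodule.mkQ_surjective K yb
      by_cases hint : ∃ z : M ⧸ K, z ≠ 0 ∧ z ∈ (S ∙ (K.mkQ y)) ⊓ (S ∙ (K.mkQ x))
      · -- Q = P
        left
        obtain ⟨z, hz0, hz1, hz2⟩ := hint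
        rw [SetLike.mem_coe, Submodule.mem_span_singleton] at hz1 hz2
        obtain ⟨a, rfl⟩ := hz1
        obtain ⟨b, hb⟩ := hz2
        have ha : a ∉ Q := by
          intro ha
          rw [hyb, Submodule.mem_annihilator_span_singleton] at ha
          exact hz0 ha
        have hbP : b • K.mkQ x ≠ 0 := by rw [hb]; exact hz0
        have hbP' : b ∉ P := by
          intro h
          rw [hxb, Submodule.mem_annihilator_span_singleton] at h
          exact hbP h
        have key : ∀ c : S, c ∈ Q ↔ c ∈ P := by
          intro c
          rw [hyb, hxb, Submodule.mem_annihilator_span_singleton,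
            Submodule.mem_annihilator_span_singleton]
          constructor
          · intro hc
            have h1 : (c * b) • K.mkQ x = 0 := by
              rw [mul_smul, hb, smul_comm, hc, smul_zero]
            have h2 : c * b ∈ P := by
              rw [hxb, Submodule.mem_annihilator_span_singleton]; exact h1
            rcases hPp.mem_or_mem h2 with h | h
            · rwa [hxb, Submodule.mem_annihilator_span_singleton] at h
            · exact absurd h hbP'
          · intro hc
            have h1 : (c * a) • K.mkQ y = 0 := by
              rw [mul_smul, ← hb, smul_comm, hc, smul_zero]
            have h2 : c * a ∈ Q := by
              rw [hyb, Submodule.mem_annihilator_span_singleton]; exact h1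
            rcases hQp.mem_or_mem h2 with h | h
            · rwa [hyb, Submodule.mem_annihilator_span_singleton] at h
            · exact absurd h ha
        have : Q = P := Ideal.ext key
        exact this
      · -- Q ∈ Ass (M ⧸ K')
        right
        push_neg at hint
        refine isAssociatedPrime_iff.mpr ⟨hQp, K'.mkQ y, ?_⟩
        rw [hyb, Submodule.bot_colon']
        ext c
        rw [Submodule.mem_annihilator_span_singleton, Submodule.mem_annihilator_span_singleton]
        constructor
        · intro hc
          have hck : c • y ∈ K := by
            rwa [← map_smul, Submodule.mkQ_apply, Submodule.Quotient.mk_eq_zero] at hc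
          rw [← map_smul, Submodule.mkQ_apply, Submodule.Quotient.mk_eq_zero]
          exact hKK'.le hck
        · intro hc
          have hcK' : c • y ∈ K' := by
            rwa [← map_smul, Submodule.mkQ_apply, Submodule.Quotient.mk_eq_zero] at hc
          have hmem : c • K.mkQ y ∈ Submodule.span S {K.mkQ x} := by
            have := Submodule.mem_comap.mp hcK'
            rwa [map_smul] at this
          by_contra hne
          exact hint _ hne ⟨Submodule.smul_mem _ _ (Submodule.mem_span_singleton_self _), hmem⟩
      
    exact Set.Finite.subset (Set.Finite.insert P (IH K' hKK')) hsub

theorem ass_finite [IsNoetherianRing S] [IsNoetherian S M] :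
    (associatedPrimes S M).Finite := by
  have := ass_finite_quot (S := S) (M := M) ⊥
  refine Set.Finite.subset this ?_
  exact associatedPrimes.subset_of_injective (f := (Submodule.quotEquivOfEqBot ⊥ rfl).symm.toLinearMap) ((Submodule.quotEquivOfEqBot ⊥ rfl).symm.injective)

end AssFinite

section Avoid

variable {S : Type*} [CommRing S] [DecidableEq (Ideal S)]

theorem homog_avoid (Hg : ℕ → S → Prop)
    (hmul : ∀ {m n a b}, Hg m a → Hg n b → Hg (m + n) (a * b))
    (hadd : ∀ {n a b}, Hg n a → Hg n b → Hg n (a + b))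
    (h1 : ∃ s, Hg 1 s) :
    ∀ T : Finset (Ideal S), (∀ P ∈ T, P.IsPrime) →
      (∀ P ∈ T, ∃ n, 1 ≤ n ∧ ∃ s, Hg n s ∧ s ∉ P) →
      ∃ n, 1 ≤ n ∧ ∃ s, Hg n s ∧ ∀ P ∈ T, s ∉ P := by
  have hpow : ∀ {n a}, Hg n a → ∀ k, 1 ≤ k → Hg (k * n) (a ^ k) := by
    intro n a ha k hk
    induction k with
    | zero => omega
    | succ k ih =>
      rcases Nat.eq_or_lt_of_le hk with h | h
      · simp only [← h, one_mul, pow_one]; exact ha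
      · have := hmul (ih (by omega)) ha
        rw [pow_succ]
        have he : (k + 1) * n = k * n + n := by ring
        rwa [he]
  intro T
  induction T using Finset.strongInduction with
  | _ T IH =>
  intro hT hne
  rcases T.eq_empty_or_nonempty with rfl | ⟨P, hP⟩
  · obtain ⟨s, hs⟩ := h1
    exact ⟨1, le_refl _, s, hs, by simp⟩
  set T₀ := T.erase P with hT₀
  have hT₀sub : T₀ ⊂ T := Finset.erase_ssubset hP
  obtain ⟨nb, hnb, b, hgb, hb⟩ := IH T₀ hT₀sub (fun Q hQ => hT Q (Finset.mem_of_mem_erase hQ))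
    (fun Q hQ => hne Q (Finset.mem_of_mem_erase hQ))
  by_cases hbP : b ∉ P
  · refine ⟨nb, hnb, b, hgb, fun Q hQ => ?_⟩
    rcases eq_or_ne Q P with rfl | hQP
    · exact hbP
    · exact hb Q (Finset.mem_erase.mpr ⟨hQP, hQ⟩)
  push_neg at hbP
  by_cases hA : ∃ Q ∈ T₀, ∀ n s, Hg n s → s ∈ Q → s ∈ P
  · obtain ⟨Q, hQ, hQP⟩ := hA
    have hQne : Q ≠ P := (Finset.mem_erase.mp hQ).1
    set T' := insert P (T₀.erase Q) with hT'
    have hT'T : T' ⊂ T := by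
      rw [Finset.ssubset_iff_of_subset]
      · exact ⟨Q, Finset.mem_of_mem_erase hQ, by
          simp only [hT', Finset.mem_insert, Finset.mem_erase]
          push_neg
          exact ⟨hQne, fun h => absurd rfl h⟩⟩
      · intro X hX
        rcases Finset.mem_insert.mp hX with rfl | hX
        · exact hP
        · exact Finset.mem_of_mem_erase (Finset.mem_of_mem_erase hX)
    have hsubT : T' ⊆ T := hT'T.subset
    obtain ⟨n, hn, s, hgs, hs⟩ := IH T' hT'T (fun X hX => hT X (hsubT hX))
      (fun X hX => hne X (hsubT hX))
    refine ⟨n, hn, s, hgs, fun X hX => ?_⟩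
    have hsP : s ∉ P := hs P (Finset.mem_insert_self _ _)
    rcases eq_or_ne X P with rfl | hXP
    · exact hsP
    rcases eq_or_ne X Q with rfl | hXQ
    · exact fun hsX => hsP (hQP n s hgs hsX)
    · exact hs X (Finset.mem_insert.mpr (Or.inr (Finset.mem_erase.mpr
        ⟨hXQ, Finset.mem_erase.mpr ⟨hXP, hX⟩⟩)))
  · push_neg at hA
    -- build c homogeneous, in every Q ∈ T₀, not in P
    have hPprime := hT P hP
    have claim : ∀ T₁ : Finset (Ideal S), T₁ ⊆ T₀ →
        ∃ n, 1 ≤ n ∧ ∃ c, Hg n c ∧ c ∉ P ∧ ∀ Q ∈ T₁, c ∈ Q := by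
      intro T₁
      induction T₁ using Finset.induction with
      | empty =>
        intro _
        obtain ⟨n, hn, s, hgs, hsP⟩ := hne P hP
        exact ⟨n, hn, s, hgs, hsP, by simp⟩
      | @insert Q' T₂ hnmem ih =>
        intro hsub
        obtain ⟨n, hn, c, hgc, hcP, hcQ⟩ := ih (fun X hX => hsub (Finset.mem_insert.mpr
          (Or.inr hX)))
        obtain ⟨d, q, hgq, hqQ', hqP⟩ := hA Q' (hsub (Finset.mem_insert_self _ _))
        refine ⟨n + d, by omega, c * q, hmul hgc hgq, fun h => ?_, fun X hX => ?_⟩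
        · rcases hPprime.mem_or_mem h with h | h
          exacts [hcP h, hqP h]
        · rcases Finset.mem_insert.mp hX with rfl | hX
          · exact Ideal.mul_mem_left _ _ hqQ'
          · exact Ideal.mul_mem_right _ _ (hcQ X hX)
    obtain ⟨nc, hnc, c, hgc, hcP, hcQ⟩ := claim T₀ (le_refl _)
    refine ⟨nc * nb, Nat.one_le_iff_ne_zero.mpr (by positivity), b ^ nc + c ^ nb, ?_, ?_⟩
    · have h1' : Hg (nc * nb) (b ^ nc) := hpow hgb nc hnc
      have h2' : Hg (nc * nb) (c ^ nb) := by
        have := hpow hgc nb hnb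
        rwa [Nat.mul_comm] at this
      exact hadd h1' h2'
    · intro Q hQmem hsQ
      rcases eq_or_ne Q P with rfl | hQP
      · have hbpow : b ^ nc ∈ Q := Ideal.pow_mem_of_mem _ hbP nc (by omega)
        have : c ^ nb ∈ Q := by
          have := Q.sub_mem hsQ hbpow
          simpa using this
        exact hcP (hPprime.mem_of_pow_mem _ this)
      · have hQprime := hT Q hQmem
        have hcpow : c ^ nb ∈ Q := Ideal.pow_mem_of_mem _ (hcQ Q (Finset.mem_erase.mpr
          ⟨hQP, hQmem⟩)) nb (by omega)
        have : b ^ nc ∈ Q := by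
          have := Q.sub_mem hsQ hcpow
          simpa using this
        exact hb Q (Finset.mem_erase.mpr ⟨hQP, hQmem⟩) (hQprime.mem_of_pow_mem _ this)

end Avoid

section NZD

/-- Existence of a "homogeneous" non-zerodivisor modulo the torsion submodule `H`. -/
theorem exists_homog_nzd {S A : Type*} [CommRing S] [IsNoetherianRing S] [AddCommGroup A]
    [Module S A] [IsNoetherian S A] (Hg : ℕ → S → Prop)
    (hmul : ∀ {m n a b}, Hg m a → Hg n b → Hg (m + n) (a * b))
    (hadd : ∀ {n a b}, Hg n a → Hg n b → Hg n (a + b))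
    (h1 : ∃ s, Hg 1 s)
    (H : Submodule S A)
    (keyX : ∀ a : A, (∀ s : S, (∃ n, 1 ≤ n ∧ Hg n s) → s • a ∈ H) → a ∈ H) :
    ∃ m, 1 ≤ m ∧ ∃ s, Hg m s ∧ ∀ a : A, s • a ∈ H → a ∈ H := by
  classical
  have hfin : (associatedPrimes S (A ⧸ H)).Finite := ass_finite
  set T := hfin.toFinset with hTdef
  have hT : ∀ P ∈ T, P.IsPrime := fun P hP => (hfin.mem_toFinset.mp hP).isPrime
  have hne : ∀ P ∈ T, ∃ n, 1 ≤ n ∧ ∃ s, Hg n s ∧ s ∉ P := by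
    intro P hP
    by_contra hcon
    push_neg at hcon
    obtain ⟨hPp, g', hg'⟩ := isAssociatedPrime_iff.mp (AssociatedPrimes.mem_iff.mp (hfin.mem_toFinset.mp hP))
    rw [Submodule.bot_colon'] at hg'
    obtain ⟨a, rfl⟩ := H.mkQ_surjective g'
    have haH : a ∈ H := by
      apply keyX
      rintro s ⟨n, hn, hgs⟩
      have hsP : s ∈ P := hcon n hn s hgs
      rw [hg', Submodule.mem_annihilator_span_singleton] at hsP
      rwa [← map_smul, Submodule.mkQ_apply, Submodule.Quotient.mk_eq_zero] at hsP
    have hg0 : H.mkQ a = 0 := by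
      rw [Submodule.mkQ_apply, Submodule.Quotient.mk_eq_zero]
      exact haH
    rw [hg0, Submodule.span_singleton_eq_bot.mpr rfl, Submodule.annihilator_bot] at hg'
    exact hPp.ne_top hg'
  obtain ⟨m, hm, s₀, hgs₀, hs₀⟩ := homog_avoid Hg (fun ha hb => hmul ha hb)
    (fun ha hb => hadd ha hb) h1 T hT hne
  refine ⟨m, hm, s₀, hgs₀, ?_⟩
  intro a haH
  by_contra hmem
  have hg0 : H.mkQ a ≠ 0 := by
    rwa [ne_eq, Submodule.mkQ_apply, Submodule.Quotient.mk_eq_zero]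
  have hzd : s₀ ∈ {r : S | ∃ z : A ⧸ H, z ≠ 0 ∧ r • z = 0} := by
    refine ⟨H.mkQ a, hg0, ?_⟩
    rw [← map_smul, Submodule.mkQ_apply, Submodule.Quotient.mk_eq_zero]
    exact haH
  rw [← biUnion_associatedPrimes_eq_zero_divisors] at hzd
  simp only [Set.mem_iUnion, SetLike.mem_coe, exists_prop] at hzd
  obtain ⟨P, hP, hsP⟩ := hzd
  exact hs₀ P (hfin.mem_toFinset.mpr hP) hsP

end NZD




open Polynomial PolynomialModule

set_option maxHeartbeats 1000000
set_option synthInstance.maxHeartbeats 1000000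

section CoreDefs

variable {R M : Type u} [CommRing R] [AddCommGroup M] [Module R M]
variable (I : Ideal R) (F : I.Filtration M)

/-- The submodule of the Rees module of elements whose degree-`k` coefficient lies
in `F.N (k+1)`. -/
noncomputable def supA1 : Submodule (reesAlgebra I) ↥(Ideal.Filtration.submodule F) where
  carrier := {a | ∀ k, (a : PolynomialModule R M).coeff k ∈ F.N (k + 1)}
  add_mem' := fun {a b} ha hb k => by
    rw [Submodule.coe_add, PolynomialModule.coeff_add, Finsupp.add_apply]
    exact Submodule.add_mem _ (ha k) (hb k)
  zero_mem' := fun k => by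
    rw [Submodule.coe_zero, PolynomialModule.coeff_zero, Finsupp.zero_apply]
    exact Submodule.zero_mem _
  smul_mem' := fun r a ha k => by
    rw [SetLike.val_smul, Subalgebra.smul_def, PolynomialModule.smul_apply]
    apply Submodule.sum_mem
    rintro ⟨j, i⟩ e
    rw [Finset.HasAntidiagonal.mem_antidiagonal] at e
    have : (j : ℕ) + (i + 1) = k + 1 := by omega
    exact this ▸ F.pow_smul_le j (i + 1) (Submodule.smul_mem_smul (r.2 j) (ha i))

/-- Homogeneous component of an element of the Rees module. -/
noncomputable def compA (k : ℕ) (a : ↥(Ideal.Filtration.submodule F)) : ↥(Ideal.Filtration.submodule F) :=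
  ⟨single R k ((a : PolynomialModule R M).coeff k), by
    intro j
    rw [PolynomialModule.coeff_single, Finsupp.single_apply]
    split_ifs with h
    · exact h ▸ a.2 k
    · exact Submodule.zero_mem _⟩

/-- `s` is homogeneous of degree `n` in the Rees algebra. -/
def HgS (n : ℕ) (s : ↥(reesAlgebra I)) : Prop :=
  ∃ x ∈ I ^ n, (s : R[X]) = Polynomial.monomial n x

/-- The irrelevant ideal of the Rees algebra. -/
noncomputable def Splus : Ideal ↥(reesAlgebra I) :=
  Ideal.span {s | ∃ n, 1 ≤ n ∧ HgS I n s}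

theorem HgS_mul {m n : ℕ} {a b : ↥(reesAlgebra I)} (ha : HgS I m a) (hb : HgS I n b) :
    HgS I (m + n) (a * b) := by
  obtain ⟨x, hx, hxa⟩ := ha
  obtain ⟨y, hy, hyb⟩ := hb
  refine ⟨x * y, pow_add I m n ▸ Ideal.mul_mem_mul hx hy, ?_⟩
  rw [Subalgebra.coe_mul, hxa, hyb, Polynomial.monomial_mul_monomial]

theorem HgS_add {n : ℕ} {a b : ↥(reesAlgebra I)} (ha : HgS I n a) (hb : HgS I n b) :
    HgS I n (a + b) := by
  obtain ⟨x, hx, hxa⟩ := ha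
  obtain ⟨y, hy, hyb⟩ := hb
  exact ⟨x + y, Submodule.add_mem _ hx hy, by
    rw [Subalgebra.coe_add, hxa, hyb, map_add]⟩

theorem HgS_zero (n : ℕ) : HgS I n (0 : ↥(reesAlgebra I)) :=
  ⟨0, Submodule.zero_mem _, by simp⟩

/-- A homogeneous element of degree `n ≥ 1` lies in `Splus ^ n`. -/
theorem HgS_mem_pow : ∀ n : ℕ, 1 ≤ n → ∀ x ∈ I ^ n,
    ∀ s : ↥(reesAlgebra I), (s : R[X]) = Polynomial.monomial n x → s ∈ Splus I ^ n := by
  intro n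
  induction n with
  | zero => omega
  | succ n ih =>
    intro _ x hx s hs
    by_cases hn0 : n = 0
    · subst hn0
      rw [pow_one]
      exact Ideal.subset_span ⟨1, le_refl _, x, by simpa using hx, by simpa using hs⟩
    · have hn1 : 1 ≤ n := by omega
      have hx' : x ∈ I ^ n * I := by rwa [← pow_succ]
      have key : ∀ z, z ∈ I ^ n * I → ∃ t : ↥(reesAlgebra I),
          (t : R[X]) = Polynomial.monomial (n + 1) z ∧ t ∈ Splus I ^ (n + 1) := by
        intro z hz
        refine Submodule.mul_induction_on hz ?_ ?_
        · intro p hp q hq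
          have hq1 : q ∈ I ^ 1 := by simpa using hq
          refine ⟨⟨Polynomial.monomial n p, reesAlgebra.monomial_mem.mpr hp⟩ *
            ⟨Polynomial.monomial 1 q, reesAlgebra.monomial_mem.mpr hq1⟩, ?_, ?_⟩
          · rw [Subalgebra.coe_mul]
            simp [Polynomial.monomial_mul_monomial]
          · rw [pow_succ]
            exact Ideal.mul_mem_mul (ih hn1 p hp _ rfl)
              (Ideal.subset_span ⟨1, le_refl _, q, hq1, rfl⟩)
        · rintro p q ⟨tp, htp, htp'⟩ ⟨tq, htq, htq'⟩
          exact ⟨tp + tq, by rw [Subalgebra.coe_add, htp, htq, map_add],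
            Submodule.add_mem _ htp' htq'⟩
      obtain ⟨t, ht, ht'⟩ := key x hx'
      have : s = t := Subtype.ext (by rw [hs, ht])
      rwa [this]

/-- `Splus ^ k` is spanned by homogeneous elements of degree at least `k`. -/
theorem Splus_pow_le : ∀ k : ℕ, 1 ≤ k →
    Splus I ^ k ≤ Ideal.span {s | ∃ n, k ≤ n ∧ HgS I n s} := by
  intro k
  induction k with
  | zero => omega
  | succ k ih =>
    intro _
    by_cases hk0 : k = 0
    · subst hk0
      rw [pow_one]
      exact le_refl _
    · have hk1 : 1 ≤ k := by omega
      rw [pow_succ]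
      calc Splus I ^ k * Splus I
          ≤ Ideal.span {s | ∃ n, k ≤ n ∧ HgS I n s} *
            Ideal.span {s | ∃ n, 1 ≤ n ∧ HgS I n s} :=
            Ideal.mul_mono (ih hk1) (le_refl _)
        _ ≤ Ideal.span {s | ∃ n, k + 1 ≤ n ∧ HgS I n s} := by
            rw [Ideal.span_mul_span']
            apply Ideal.span_le.mpr
            rintro _ ⟨a, ⟨na, hna, hga⟩, b, ⟨nb, hnb, hgb⟩, rfl⟩
            exact Ideal.subset_span ⟨na + nb, by omega, HgS_mul I hga hgb⟩

/-- The colon ideal `{s | s • a ∈ B}`. -/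
noncomputable def colIdeal (B : Submodule (reesAlgebra I) ↥(Ideal.Filtration.submodule F))
    (a : ↥(Ideal.Filtration.submodule F)) : Ideal ↥(reesAlgebra I) where
  carrier := {s | s • a ∈ B}
  add_mem' := fun {p q} hp hq => by
    simp only [Set.mem_setOf_eq, add_smul]
    exact Submodule.add_mem _ hp hq
  zero_mem' := by
    simp only [Set.mem_setOf_eq, zero_smul]
    exact Submodule.zero_mem _
  smul_mem' := fun r p hp => by
    simp only [Set.mem_setOf_eq, smul_eq_mul, mul_smul]
    exact Submodule.smul_mem _ _ hp

@[simp]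
theorem mem_colIdeal {B : Submodule (reesAlgebra I) ↥(Ideal.Filtration.submodule F)}
    {a : ↥(Ideal.Filtration.submodule F)} {s : ↥(reesAlgebra I)} :
    s ∈ colIdeal I F B a ↔ s • a ∈ B := Iff.rfl

/-- The chain of torsion submodules. -/
noncomputable def supH (k : ℕ) : Submodule (reesAlgebra I) ↥(Ideal.Filtration.submodule F) where
  carrier := {a | ∀ s ∈ Splus I ^ k, s • a ∈ supA1 I F}
  add_mem' := fun {a b} ha hb s hs => by
    rw [smul_add]
    exact Submodule.add_mem _ (ha s hs) (hb s hs)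
  zero_mem' := fun s hs => by
    rw [smul_zero]
    exact Submodule.zero_mem _
  smul_mem' := fun t a ha s hs => by
    rw [smul_smul]
    exact ha _ (Ideal.mul_mem_right t _ hs)

theorem mem_supH {k : ℕ} {a : ↥(Ideal.Filtration.submodule F)} :
    a ∈ supH I F k ↔ ∀ s ∈ Splus I ^ k, s • a ∈ supA1 I F := Iff.rfl

theorem supA1_le_supH (k : ℕ) : supA1 I F ≤ supH I F k :=
  fun a ha s _ => Submodule.smul_mem _ s ha

theorem supH_mono : Monotone (supH I F) := by
  apply monotone_nat_of_le_succ
  intro k a ha s hs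
  exact ha s (Ideal.pow_le_pow_right (Nat.le_succ k) hs)

theorem coe_smul' (s : ↥(reesAlgebra I)) (a : ↥(Ideal.Filtration.submodule F)) :
    ((s • a : ↥(Ideal.Filtration.submodule F)) : PolynomialModule R M)
      = (s : R[X]) • (a : PolynomialModule R M) := by
  rw [SetLike.val_smul, Subalgebra.smul_def]

theorem compA_coe (k : ℕ) (a : ↥(Ideal.Filtration.submodule F)) :
    ((compA I F k a : ↥(Ideal.Filtration.submodule F)) : PolynomialModule R M)
      = single R k ((a : PolynomialModule R M).coeff k) := rfl

theorem compA_add (k : ℕ) (a b : ↥(Ideal.Filtration.submodule F)) :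
    compA I F k (a + b) = compA I F k a + compA I F k b := by
  apply Subtype.ext
  rw [Submodule.coe_add, compA_coe, compA_coe, compA_coe, Submodule.coe_add,
    PolynomialModule.coeff_add, Finsupp.add_apply, PolynomialModule.single_add]

theorem mem_supA1_iff {a : ↥(Ideal.Filtration.submodule F)} :
    a ∈ supA1 I F ↔ ∀ k, (a : PolynomialModule R M).coeff k ∈ F.N (k + 1) := Iff.rfl

theorem single_mem_supA1 {k : ℕ} {a : ↥(Ideal.Filtration.submodule F)} {y : M}
    (hcoe : (a : PolynomialModule R M) = single R k y) (hy : y ∈ F.N (k + 1)) :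
    a ∈ supA1 I F := by
  intro j
  rw [hcoe, PolynomialModule.coeff_single, Finsupp.single_apply]
  split_ifs with h
  · exact h ▸ hy
  · exact Submodule.zero_mem _

theorem core_superficial [IsNoetherianRing R] (hFG : (Ideal.Filtration.submodule F).FG) :
    ∃ m : ℕ, 1 ≤ m ∧ ∃ x ∈ I ^ m, ∃ c : ℕ, ∀ n : ℕ, c ≤ n →
      ∀ y ∈ F.N n, x • y ∈ F.N (n + m + 1) → y ∈ F.N (n + 1) := by
  classical
  haveI : Module.Finite ↥(reesAlgebra I) ↥(Ideal.Filtration.submodule F) :=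
    Module.Finite.iff_fg.mpr hFG
  haveI : IsNoetherian ↥(reesAlgebra I) ↥(Ideal.Filtration.submodule F) :=
    isNoetherian_of_isNoetherianRing_of_finite ↥(reesAlgebra I) ↥(Ideal.Filtration.submodule F)
  -- stabilize the torsion chain
  obtain ⟨k₁, hk₁⟩ := monotone_stabilizes_iff_noetherian.mpr inferInstance
    ⟨supH I F, supH_mono I F⟩
  set k₀ := k₁ + 1 with hk₀def
  have hk₀1 : 1 ≤ k₀ := by omega
  set H := supH I F k₀ with hHdef
  have hHstep : supH I F (k₀ + 1) = H := by
    rw [hHdef]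
    exact ((hk₁ (k₀ + 1) (by omega)).symm.trans (hk₁ k₀ (by omega)))
  -- key property: no Splus-torsion above H
  have keyX : ∀ a : ↥(Ideal.Filtration.submodule F),
      (∀ s : ↥(reesAlgebra I), (∃ n, 1 ≤ n ∧ HgS I n s) → s • a ∈ H) → a ∈ H := by
    intro a ha0
    have ha : ∀ s ∈ Splus I, s • a ∈ H := by
      have hsp : Splus I ≤ colIdeal I F H a :=
        Ideal.span_le.mpr (fun t ht => ha0 t ht)
      exact fun s hs => hsp hs
    rw [← hHstep, mem_supH]
    intro s hs
    rw [pow_succ] at hs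
    have : Splus I ^ k₀ * Splus I ≤ colIdeal I F (supA1 I F) a := by
      rw [Ideal.mul_le]
      intro r hr t ht
      rw [mem_colIdeal, mul_smul]
      exact ha t ht r hr
    exact this hs
  -- homogeneous elements of high degree lie in Splus ^ k₀
  have hhigh : ∀ (j : ℕ), k₀ ≤ j → ∀ x ∈ I ^ j, ∀ t : ↥(reesAlgebra I),
      (t : R[X]) = Polynomial.monomial j x → t ∈ Splus I ^ k₀ := by
    intro j hj x hx t ht
    exact Ideal.pow_le_pow_right hj (HgS_mem_pow I j (le_trans hk₀1 hj) x hx t ht)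
  -- G2 : homogeneous components of H stay in H
  have hcomp : ∀ a ∈ H, ∀ k, compA I F k a ∈ H := by
    intro a ha k
    rw [mem_supH]
    intro s hs
    have hspan : Splus I ^ k₀ ≤ Ideal.span {s | ∃ n, k₀ ≤ n ∧ HgS I n s} :=
      Splus_pow_le I k₀ hk₀1
    have hsub : {s : ↥(reesAlgebra I) | ∃ n, k₀ ≤ n ∧ HgS I n s} ⊆
        ↑(colIdeal I F (supA1 I F) (compA I F k a)) := by
      rintro t ⟨n, hn, x, hxm, hcoe⟩
      rw [SetLike.mem_coe, mem_colIdeal]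
      -- t • compA k a = single (n+k) (x • a k) which is in A1
      have hta : t • a ∈ supA1 I F := ha t (hhigh n hn x hxm t hcoe)
      have hXak : x • (a : PolynomialModule R M).coeff k ∈ F.N (n + k + 1) := by
        have h1 := hta (n + k)
        rw [coe_smul', hcoe, monomial_smul_apply] at h1
        simpa using h1
      apply single_mem_supA1 I F (k := n + k) (y := x • (a : PolynomialModule R M).coeff k)
      · rw [coe_smul', hcoe, compA_coe, PolynomialModule.monomial_smul_single]
      · exact hXak
    exact (le_trans hspan (Ideal.span_le.mpr hsub)) hs
  -- generators of H and degree bound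
  obtain ⟨gfin, hgfin⟩ := IsNoetherian.noetherian H
  set D := gfin.sup (fun g => ((g : PolynomialModule R M).coeff.support.sup id)) with hDdef
  have hD : ∀ g ∈ gfin, ∀ i, D < i → (g : PolynomialModule R M).coeff i = 0 := by
    intro g hg i hi
    by_contra hne
    have hmem : i ∈ (g : PolynomialModule R M).coeff.support := Finsupp.mem_support_iff.mpr hne
    have h1 : i ≤ (g : PolynomialModule R M).coeff.support.sup id := Finset.le_sup (f := id) hmem
    have h2 : (g : PolynomialModule R M).coeff.support.sup id ≤ D := Finset.le_sup (f := fun g :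
      ↥(Ideal.Filtration.submodule F) => ((g : PolynomialModule R M).coeff.support.sup id)) hg
    omega
  set c₁ := D + k₀ + 1 with hc₁def
  -- compA as additive hom
  have compA_sum : ∀ (T : Finset ↥(Ideal.Filtration.submodule F))
      (φ : ↥(Ideal.Filtration.submodule F) → ↥(Ideal.Filtration.submodule F)) (k : ℕ),
      compA I F k (∑ g ∈ T, φ g) = ∑ g ∈ T, compA I F k (φ g) := by
    intro T φ k
    induction T using Finset.induction with
    | empty =>
      simp only [Finset.sum_empty]
      apply Subtype.ext
      rw [compA_coe, Submodule.coe_zero, PolynomialModule.coeff_zero, Finsupp.zero_apply, PolynomialModule.single_zero]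
    | @insert g T hgT ih =>
      rw [Finset.sum_insert hgT, Finset.sum_insert hgT, compA_add, ih]
  -- G3 : high-degree components of H are in A1
  have hG3 : ∀ a ∈ H, ∀ k, c₁ ≤ k → compA I F k a ∈ supA1 I F := by
    intro a ha k hk
    have haspan : a ∈ Submodule.span (reesAlgebra I)
        (↑gfin : Set ↥(Ideal.Filtration.submodule F)) := by
      rw [hgfin]; exact ha
    obtain ⟨f, -, hf⟩ := Submodule.mem_span_finset.mp haspan
    rw [← hf, compA_sum]
    refine Submodule.sum_mem _ (fun g hg => ?_)
    have hHg : g ∈ H := by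
      rw [← hgfin]
      exact Submodule.subset_span hg
    have hcoeff : ((f g • g : ↥(Ideal.Filtration.submodule F)) : PolynomialModule R M).coeff k
        ∈ F.N (k + 1) := by
      rw [coe_smul', PolynomialModule.smul_apply]
      apply Submodule.sum_mem
      rintro ⟨j, i⟩ e
      rw [Finset.HasAntidiagonal.mem_antidiagonal] at e
      by_cases hiD : D < i
      · rw [hD g hg i hiD, smul_zero]
        exact Submodule.zero_mem _
      · have hj : k₀ ≤ j := by omega
        have hx : ((f g : R[X])).coeff j ∈ I ^ j := (f g).2 j
        set t : ↥(reesAlgebra I) := ⟨Polynomial.monomial j (((f g : R[X])).coeff j),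
          reesAlgebra.monomial_mem.mpr hx⟩ with htdef
        have htmem : t ∈ Splus I ^ k₀ := hhigh j hj _ hx t rfl
        have h2 : t • compA I F i g ∈ supA1 I F := (hcomp g hHg i) t htmem
        have h3 := h2 (j + i)
        rw [coe_smul', compA_coe] at h3
        have ht : (t : R[X]) = Polynomial.monomial j (((f g : R[X])).coeff j) := rfl
        rw [ht, PolynomialModule.monomial_smul_single, PolynomialModule.coeff_single, Finsupp.single_apply, if_pos rfl] at h3
        have he : j + i + 1 = k + 1 := by omega
        rw [he] at h3
        exact h3
    exact single_mem_supA1 I F (compA_coe I F k _) hcoeff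
  -- find a homogeneous nonzerodivisor modulo H
  obtain ⟨m, hm, s₀, hgs₀, hnzd⟩ := exists_homog_nzd
    (S := ↥(reesAlgebra I)) (A := ↥(Ideal.Filtration.submodule F)) (HgS I)
    (fun ha hb => HgS_mul I ha hb) (fun ha hb => HgS_add I ha hb)
    ⟨0, HgS_zero I 1⟩ H keyX
  obtain ⟨x, hxm, hscoe⟩ := hgs₀
  refine ⟨m, hm, x, hxm, c₁, ?_⟩
  intro n hn y hy hxy
  set a : ↥(Ideal.Filtration.submodule F) := ⟨single R n y, by
    intro j
    rw [PolynomialModule.coeff_single, Finsupp.single_apply]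
    split_ifs with h
    · exact h ▸ hy
    · exact Submodule.zero_mem _⟩ with hadef
  have hacoe : (a : PolynomialModule R M) = single R n y := rfl
  have h1 : s₀ • a ∈ supA1 I F := by
    apply single_mem_supA1 I F (k := m + n) (y := x • y)
    · rw [coe_smul', hscoe, hacoe, PolynomialModule.monomial_smul_single]
    · have he : m + n + 1 = n + m + 1 := by omega
      rw [he]
      exact hxy
  have h3 : a ∈ H := hnzd a (supA1_le_supH I F k₀ h1)
  have h4 := hG3 a h3 n hn (n)
  rw [compA_coe, PolynomialModule.coeff_single, Finsupp.single_apply, if_pos rfl, hacoe, PolynomialModule.coeff_single, Finsupp.single_apply, if_pos rfl] at h4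
  exact h4

/-- Core payoff restated. -/
theorem exists_superficial_core [IsNoetherianRing R]
    (hFG : (Ideal.Filtration.submodule F).FG) :
    ∃ m : ℕ, 1 ≤ m ∧ ∃ x ∈ I ^ m, ∃ c : ℕ, ∀ n : ℕ, c ≤ n →
      Submodule.comap (LinearMap.lsmul R M x) (F.N (n + m)) ⊓ F.N c = F.N n := by
  obtain ⟨m, hm, x, hxm, c, hcore⟩ := core_superficial I F hFG
  refine ⟨m, hm, x, hxm, c, ?_⟩
  intro n hn
  apply le_antisymm
  · intro z hz
    rw [Submodule.mem_inf] at hz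
    obtain ⟨hz1, hz2⟩ := hz
    rw [Submodule.mem_comap, LinearMap.lsmul_apply] at hz1
    -- ascending induction from c to n
    have main : ∀ k, c + k ≤ n → z ∈ F.N (c + k) := by
      intro k
      induction k with
      | zero => intro _; simpa using hz2
      | succ k ih =>
        intro hkn
        have hzk : z ∈ F.N (c + k) := ih (by omega)
        have hxz : x • z ∈ F.N (c + k + m + 1) := by
          apply F.antitone _ hz1
          omega
        have := hcore (c + k) (by omega) z hzk hxz
        have he : c + (k + 1) = c + k + 1 := by omega
        rw [he]
        exact this
    have := main (n - c) (by omega)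
    have he : c + (n - c) = n := by omega
    rwa [he] at this
  · intro z hz
    rw [Submodule.mem_inf]
    refine ⟨?_, F.antitone hn hz⟩
    rw [Submodule.mem_comap, LinearMap.lsmul_apply]
    have : x • z ∈ I ^ m • F.N n := Submodule.smul_mem_smul hxm hz
    have hle := F.pow_smul_le m n
    have he : m + n = n + m := by omega
    rw [he] at hle
    exact hle this

end CoreDefs


/-- **existence of superficial elements.** Let `R` be Noetherian, `I` an
ideal, and `M` an `I`-filtered module (`M₀ = M`, `I Mₙ ⊆ Mₙ₊₁`, `⊕ₙ Mₙ` finitely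
generated over the Rees ring `⊕ₙ Iⁿ`).  Then there are `m ≥ 1`, `x ∈ Iᵐ`, and `c` such
that for all `n ≥ c` we have `(M_{n+m} :_M x) ∩ M_c = Mₙ`; that is, `x` is a superficial
element for `M` of order `m`. -/
theorem exists_superficial_element {R M : Type u} [CommRing R] [IsNoetherianRing R]
    [AddCommGroup M] [Module R M] [Module.Finite R M]
    (I : Ideal R) (F : I.Filtration M) (hF0 : F.N 0 = ⊤) (hFG : F.submodule.FG) :
    ∃ m : ℕ, 1 ≤ m ∧ ∃ x ∈ I ^ m, ∃ c : ℕ, ∀ n : ℕ, c ≤ n →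
      Submodule.comap (LinearMap.lsmul R M x) (F.N (n + m)) ⊓ F.N c = F.N n :=
  exists_superficial_core I F hFG
end

section
/- Let $R$ be a Noetherian ring, $I$ an ideal, $M$ an $I$-filtered module, and $x$ a superficial element for $M$ of order $m$. Then for all sufficiently large $n$, $(M_n :_M x) = (0 :_M x) + M_{n-m}$. -/
universe u

/-- Let `R` be Noetherian, `I` an ideal, `M` an `I`-filtered module,
and `x ∈ Iᵐ` a superficial element for `M` of order `m` (with constant `c`).  Then for
all sufficiently large `n`, `(Mₙ :_M x) = (0 :_M x) + M_{n-m}`. -/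
theorem superficial_colon_eq {R M : Type u} [CommRing R] [IsNoetherianRing R]
    [AddCommGroup M] [Module R M] [Module.Finite R M]
    (I : Ideal R) (F : I.Filtration M) (hF0 : F.N 0 = ⊤) (hFG : F.submodule.FG)
    (m : ℕ) (hm : 1 ≤ m) (x : R) (hx : x ∈ I ^ m) (c : ℕ)
    (hsup : ∀ n : ℕ, c ≤ n →
      Submodule.comap (LinearMap.lsmul R M x) (F.N (n + m)) ⊓ F.N c = F.N n) :
    ∃ N₀ : ℕ, ∀ n : ℕ, N₀ ≤ n →
      Submodule.comap (LinearMap.lsmul R M x) (F.N n) =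
        LinearMap.ker (LinearMap.lsmul R M x) ⊔ F.N (n - m) := by
  -- `F` is stable
  have hstable : F.Stable :=
    (F.submodule_fg_iff_stable (fun i => IsNoetherian.noetherian _)).mp hFG
  -- Artin–Rees: the filtration `n ↦ F.N n ⊓ xM` is stable
  set Nx : Submodule R M := LinearMap.range (LinearMap.lsmul R M x) with hNx
  have hG : (F ⊓ I.trivialFiltration Nx).Stable := hstable.inter_right _
  obtain ⟨k, hk⟩ := hG.exists_pow_smul_eq_of_ge
  -- `I ^ j • ⊤ ≤ F.N j`
  have hpow : ∀ j : ℕ, I ^ j • (⊤ : Submodule R M) ≤ F.N j := fun j => by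
    have := F.pow_smul_le j 0
    rwa [hF0, add_zero] at this
  refine ⟨k + c + m, fun n hn => ?_⟩
  apply le_antisymm
  · intro y hy
    have hy' : x • y ∈ F.N n := hy
    have hyN : x • y ∈ (F ⊓ I.trivialFiltration Nx).N n :=
      ⟨hy', ⟨y, rfl⟩⟩
    rw [hk n (by omega)] at hyN
    have hle : I ^ (n - k) • (F ⊓ I.trivialFiltration Nx).N k ≤
        Submodule.map (LinearMap.lsmul R M x) (F.N (n - k)) := by
      have h1 : (F ⊓ I.trivialFiltration Nx).N k ≤ Nx := inf_le_right
      calc I ^ (n - k) • (F ⊓ I.trivialFiltration Nx).N k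
          ≤ I ^ (n - k) • Nx := smul_mono_right _ h1
        _ = Submodule.map (LinearMap.lsmul R M x) (I ^ (n - k) • ⊤) := by
            rw [Submodule.map_smul'', Submodule.map_top]
        _ ≤ Submodule.map (LinearMap.lsmul R M x) (F.N (n - k)) :=
            Submodule.map_mono (hpow _)
    obtain ⟨z, hz, hxz⟩ := hle hyN
    have hxz' : (x • z : M) = x • y := hxz
    -- `z ∈ F.N c`
    have hzc : z ∈ F.N c := F.antitone (by omega : c ≤ n - k) hz
    -- apply superficiality at `n - m`
    have hzn : z ∈ F.N (n - m) := by
      rw [← hsup (n - m) (by omega)]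
      refine ⟨?_, hzc⟩
      show x • z ∈ F.N (n - m + m)
      rw [hxz']
      have : n - m + m = n := by omega
      rwa [this]
    have hker : y - z ∈ LinearMap.ker (LinearMap.lsmul R M x) := by
      simp only [LinearMap.mem_ker, LinearMap.lsmul_apply, smul_sub, hxz', sub_self]
    have := Submodule.add_mem_sup hker hzn
    rwa [sub_add_cancel] at this
  · refine sup_le ?_ ?_
    · intro y hy
      rw [LinearMap.mem_ker] at hy
      show LinearMap.lsmul R M x y ∈ F.N n
      rw [hy]; exact zero_mem _
    · intro y hy
      show x • y ∈ F.N n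
      have : x • y ∈ I ^ m • F.N (n - m) := Submodule.smul_mem_smul hx hy
      have h2 := F.pow_smul_le m (n - m)
      have : x • y ∈ F.N (m + (n - m)) := h2 this
      rwa [show m + (n - m) = n by omega] at this
end

section
/- Let $R$ be a Noetherian local ring, $P$ a prime ideal of $R$, and suppose that $R/P$ is Cohen-Macaulay and that $P^n/P^{n+1}$ is a projective (equivalently free) $R/P$-module for every $n \geq 0$. Then $R/P^n$ is a Cohen-Macaulay $R$-module for every $n \geq 1$. -/
open IsLocalRing

/-- The depth of a module `M` over a Noetherian local ring `(R, 𝔪)`: the supremum of the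
lengths of regular sequences on `M` consisting of elements of `𝔪`. -/
noncomputable def moduleDepth (R M : Type*) [CommRing R] [IsLocalRing R]
    [AddCommGroup M] [Module R M] : ℕ∞ :=
  sSup {n : ℕ∞ | ∃ rs : List R, (rs.length : ℕ∞) = n ∧
    (∀ r ∈ rs, r ∈ maximalIdeal R) ∧ RingTheory.Sequence.IsRegular M rs}

/-- The (Krull) dimension of a module: the Krull dimension of `R ⧸ ann M`. -/
noncomputable def moduleDim (R M : Type*) [CommRing R]
    [AddCommGroup M] [Module R M] : WithBot ℕ∞ :=
  ringKrullDim (R ⧸ Module.annihilator R M)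

/-- A finitely generated module over a Noetherian local ring is Cohen–Macaulay if its
depth equals its dimension. -/
def IsCohenMacaulayModule (R M : Type*) [CommRing R] [IsLocalRing R]
    [AddCommGroup M] [Module R M] : Prop :=
  (moduleDepth R M : WithBot ℕ∞) = moduleDim R M

section AuxiliaryFiltration

open Pointwise

universe u v w

/-- `ModFilt R N n M` : `M` has a filtration of length `n` whose graded pieces are
nonzero finite free `N`-"modules" (finite direct sums of copies of `N`). -/
def ModFilt (R : Type u) [CommRing R] (N : Type v) [AddCommGroup N] [Module R N] :
    ℕ → ∀ (M : Type w) [AddCommGroup M] [Module R M], Prop :=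
  Nat.rec (motive := fun _ => ∀ (M : Type w) [AddCommGroup M] [Module R M], Prop)
    (fun M _ _ => Subsingleton M)
    (fun _ ih M _ _ => ∃ A : Submodule R M,
      (∃ k : ℕ, 0 < k ∧ Nonempty (↥A ≃ₗ[R] (Fin k → N))) ∧ ih (M ⧸ A))

variable {R : Type u} [CommRing R] {N : Type v} [AddCommGroup N] [Module R N]

lemma modFilt_zero_iff (M : Type w) [AddCommGroup M] [Module R M] :
    ModFilt R N 0 M ↔ Subsingleton M := Iff.rfl

lemma modFilt_succ_iff (n : ℕ) (M : Type w) [AddCommGroup M] [Module R M] :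
    ModFilt R N (n+1) M ↔ ∃ A : Submodule R M,
      (∃ k : ℕ, 0 < k ∧ Nonempty (↥A ≃ₗ[R] (Fin k → N))) ∧ ModFilt R N n (M ⧸ A) := Iff.rfl

lemma mem_smul_top_iff {M : Type w} [AddCommGroup M] [Module R M] (r : R) (x : M) :
    x ∈ r • (⊤ : Submodule R M) ↔ ∃ m : M, r • m = x := by
  rw [← SetLike.mem_coe, Submodule.coe_pointwise_smul, Set.mem_smul_set]
  constructor
  · rintro ⟨m, -, rfl⟩; exact ⟨m, rfl⟩
  · rintro ⟨m, rfl⟩; exact ⟨m, trivial, rfl⟩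

lemma mem_smul_sub_iff {M : Type w} [AddCommGroup M] [Module R M] (r : R) (A : Submodule R M)
    (x : M) : x ∈ r • A ↔ ∃ m ∈ A, r • m = x := by
  rw [← SetLike.mem_coe, Submodule.coe_pointwise_smul, Set.mem_smul_set]
  simp

section single

variable {M : Type w} [AddCommGroup M] [Module R M] {r : R}

lemma isSMulRegular_pi {k : ℕ} (h : IsSMulRegular N r) :
    IsSMulRegular (Fin k → N) r := by
  intro f g hfg
  funext i
  exact h (congrFun hfg i)

lemma isSMulRegular_of_pi {k : ℕ} (hk : 0 < k)
    (h : IsSMulRegular (Fin k → N) r) : IsSMulRegular N r := by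
  intro x y hxy
  have hxy' : r • x = r • y := hxy
  have h2 : r • (fun _ => x : Fin k → N) = r • (fun _ => y) := funext fun _ => hxy'
  have := h h2
  exact congrFun this ⟨0, hk⟩

lemma isSMulRegular_submodule (h : IsSMulRegular M r) (A : Submodule R M) :
    IsSMulRegular (↥A) r := by
  intro x y hxy
  exact Subtype.ext (h (congrArg Subtype.val hxy))

lemma isSMulRegular_of_ses {A : Submodule R M} (h1 : IsSMulRegular (↥A) r)
    (h2 : IsSMulRegular (M ⧸ A) r) : IsSMulRegular M r := by
  intro x y hxy
  have hxy' : r • x = r • y := hxy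
  have hsub : r • (x - y) = 0 := by rw [smul_sub, hxy', sub_self]
  have hq : r • (Submodule.Quotient.mk (p := A) (x - y)) = (0 : M ⧸ A) := by
    rw [← Submodule.Quotient.mk_smul, hsub, Submodule.Quotient.mk_zero]
  have hmem : x - y ∈ A := by
    have h0 : r • (Submodule.Quotient.mk (p := A) (x - y)) = r • (0 : M ⧸ A) := by
      rw [hq, smul_zero]
    have := h2 h0
    rwa [Submodule.Quotient.mk_eq_zero] at this
  have hz : r • (⟨x - y, hmem⟩ : A) = r • (0 : A) := by
    apply Subtype.ext
    simpa using hsub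
  have := h1 hz
  have hxy0 : x - y = 0 := congrArg Subtype.val this
  exact sub_eq_zero.mp hxy0

/-- If `N` acts regularly then any module with a ModFilt filtration does. -/
lemma modFilt_isSMulRegular (h : IsSMulRegular N r) :
    ∀ (n : ℕ) (M : Type w) [AddCommGroup M] [Module R M],
      ModFilt R N n M → IsSMulRegular M r := by
  intro n
  induction n with
  | zero =>
    intro M _ _ hf
    have : Subsingleton M := hf
    intro x y _
    exact Subsingleton.elim x y
  | succ n ih =>
    rintro M _ _ ⟨A, ⟨k, hk, ⟨e⟩⟩, hQ⟩
    refine isSMulRegular_of_ses (r := r) ?_ (ih _ hQ)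
    exact (LinearEquiv.isSMulRegular_congr e r).mpr (isSMulRegular_pi h)

end single

lemma modFilt_congr {n : ℕ} :
    ∀ (M : Type w) [AddCommGroup M] [Module R M]
      (M' : Type w) [AddCommGroup M'] [Module R M'] (e : M ≃ₗ[R] M'),
      ModFilt R N n M → ModFilt R N n M' := by
  induction n with
  | zero =>
    intro M _ _ M' _ _ e hf
    have : Subsingleton M := hf
    exact e.symm.toEquiv.injective.subsingleton
  | succ n ih =>
    rintro M _ _ M' _ _ e ⟨A, ⟨k, hk, ⟨eA⟩⟩, hQ⟩
    refine ⟨A.map e.toLinearMap, ⟨k, hk, ⟨(e.submoduleMap A).symm.trans eA⟩⟩, ?_⟩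
    exact ih _ _ (Submodule.Quotient.equiv A (A.map e.toLinearMap) e rfl) hQ

section quotstep

variable {M : Type w} [AddCommGroup M] [Module R M] {r : R}

lemma smul_top_inf_eq (A : Submodule R M) (hr : IsSMulRegular (M ⧸ A) r) :
    r • (⊤ : Submodule R M) ⊓ A = r • A := by
  apply le_antisymm
  · intro x hx
    rw [Submodule.mem_inf] at hx
    obtain ⟨hx1, hx2⟩ := hx
    obtain ⟨m, rfl⟩ := (mem_smul_top_iff r x).mp hx1
    have hq : r • (Submodule.Quotient.mk (p := A) m) = r • (0 : M ⧸ A) := by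
      rw [smul_zero, ← Submodule.Quotient.mk_smul, Submodule.Quotient.mk_eq_zero]
      exact hx2
    have hm0 : Submodule.Quotient.mk (p := A) m = 0 := hr hq
    have hm : m ∈ A := (Submodule.Quotient.mk_eq_zero A).mp hm0
    exact (mem_smul_sub_iff r A _).mpr ⟨m, hm, rfl⟩
  · refine le_inf ?_ ?_
    · intro x hx
      obtain ⟨m, hm, rfl⟩ := (mem_smul_sub_iff r A x).mp hx
      exact (mem_smul_top_iff r _).mpr ⟨m, rfl⟩
    · intro x hx
      obtain ⟨m, hm, rfl⟩ := (mem_smul_sub_iff r A x).mp hx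
      exact A.smul_mem r hm

lemma comap_subtype_smul_top (A : Submodule R M) (hr : IsSMulRegular (M ⧸ A) r) :
    Submodule.comap A.subtype (r • (⊤ : Submodule R M)) = r • (⊤ : Submodule R ↥A) := by
  apply le_antisymm
  · intro x hmem
    rw [Submodule.mem_comap] at hmem
    have hx' : (x : M) ∈ r • (⊤ : Submodule R M) ⊓ A :=
      Submodule.mem_inf.mpr ⟨hmem, x.2⟩
    rw [smul_top_inf_eq A hr] at hx'
    obtain ⟨m, hm, hrm⟩ := (mem_smul_sub_iff r A _).mp hx'
    exact (mem_smul_top_iff r x).mpr ⟨⟨m, hm⟩, Subtype.ext hrm⟩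
  · intro x hmem
    obtain ⟨m, hrm⟩ := (mem_smul_top_iff r x).mp hmem
    rw [Submodule.mem_comap]
    have hv : (x : M) = r • (m : M) := by rw [← hrm]; rfl
    show (x : M) ∈ r • (⊤ : Submodule R M)
    rw [hv]
    exact (mem_smul_top_iff r _).mpr ⟨m, rfl⟩

/-- The image of `A` in `M ⧸ rM` is isomorphic to `A ⧸ rA`, provided `r` is regular
on `M ⧸ A`. -/
noncomputable def imageEquivQuot (A : Submodule R M) (hr : IsSMulRegular (M ⧸ A) r) :
    ↥(A.map (r • (⊤ : Submodule R M)).mkQ) ≃ₗ[R]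
      (↥A ⧸ (r • (⊤ : Submodule R ↥A))) := by
  let f : ↥A →ₗ[R] M ⧸ (r • (⊤ : Submodule R M)) :=
    (r • (⊤ : Submodule R M)).mkQ.comp A.subtype
  have hker : LinearMap.ker f = r • (⊤ : Submodule R ↥A) := by
    rw [show f = (r • (⊤ : Submodule R M)).mkQ.comp A.subtype from rfl,
      LinearMap.ker_comp, Submodule.ker_mkQ]
    exact comap_subtype_smul_top A hr
  have hrange : LinearMap.range f = A.map (r • (⊤ : Submodule R M)).mkQ := by
    rw [show f = (r • (⊤ : Submodule R M)).mkQ.comp A.subtype from rfl,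
      LinearMap.range_comp, Submodule.range_subtype]
  exact (LinearEquiv.ofEq _ _ hrange.symm) ≪≫ₗ (f.quotKerEquivRange).symm ≪≫ₗ
    (Submodule.quotEquivOfEq _ _ hker)

/-- `(M ⧸ rM) ⧸ (image of A) ≃ (M ⧸ A) ⧸ r•⊤`. -/
noncomputable def doubleQuotEquiv (A : Submodule R M) :
    ((M ⧸ (r • (⊤ : Submodule R M))) ⧸ (A.map (r • (⊤ : Submodule R M)).mkQ)) ≃ₗ[R]
      ((M ⧸ A) ⧸ (r • (⊤ : Submodule R (M ⧸ A)))) := by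
  let T : Submodule R M := r • (⊤ : Submodule R M) ⊔ A
  have h1 : A.map (r • (⊤ : Submodule R M)).mkQ = T.map (r • (⊤ : Submodule R M)).mkQ := by
    rw [show T = r • (⊤ : Submodule R M) ⊔ A from rfl, Submodule.map_sup,
      Submodule.mkQ_map_self, bot_sup_eq]
  have h2 : r • (⊤ : Submodule R (M ⧸ A)) = T.map A.mkQ := by
    rw [show T = r • (⊤ : Submodule R M) ⊔ A from rfl, Submodule.map_sup,
      Submodule.mkQ_map_self, sup_bot_eq, Submodule.map_pointwise_smul,
      Submodule.map_top, Submodule.range_mkQ]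
  exact (Submodule.quotEquivOfEq _ _ h1) ≪≫ₗ
    (Submodule.quotientQuotientEquivQuotient _ T le_sup_left) ≪≫ₗ
    (Submodule.quotientQuotientEquivQuotient A T le_sup_right).symm ≪≫ₗ
    (Submodule.quotEquivOfEq _ _ h2.symm)

/-- `(Fin k → N) ⧸ r•⊤ ≃ Fin k → (N ⧸ r•⊤)`. -/
noncomputable def piQuotEquiv (k : ℕ) (r : R) :
    ((Fin k → N) ⧸ (r • (⊤ : Submodule R (Fin k → N)))) ≃ₗ[R]
      (Fin k → (N ⧸ (r • (⊤ : Submodule R N)))) := by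
  let π : (Fin k → N) →ₗ[R] (Fin k → (N ⧸ (r • (⊤ : Submodule R N)))) :=
    LinearMap.pi (fun i => (r • (⊤ : Submodule R N)).mkQ.comp (LinearMap.proj i))
  have hsurj : Function.Surjective π := by
    intro g
    have : ∀ i, ∃ y : N, Submodule.Quotient.mk y = g i :=
      fun i => Submodule.Quotient.mk_surjective _ (g i)
    choose f hf using this
    exact ⟨f, funext fun i => hf i⟩
  have hker : LinearMap.ker π = r • (⊤ : Submodule R (Fin k → N)) := by
    ext f
    rw [LinearMap.mem_ker, mem_smul_top_iff]
    constructor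
    · intro hf
      have : ∀ i, ∃ y : N, r • y = f i := by
        intro i
        have hi : Submodule.Quotient.mk (f i) = (0 : N ⧸ (r • (⊤ : Submodule R N))) :=
          congrFun hf i
        rw [Submodule.Quotient.mk_eq_zero] at hi
        exact (mem_smul_top_iff r (f i)).mp hi
      choose g hg using this
      exact ⟨g, funext hg⟩
    · rintro ⟨g, rfl⟩
      funext i
      show Submodule.Quotient.mk ((r • g) i) = (0 : N ⧸ (r • (⊤ : Submodule R N)))
      rw [Submodule.Quotient.mk_eq_zero]
      exact (mem_smul_top_iff r _).mpr ⟨g i, rfl⟩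
  exact (Submodule.quotEquivOfEq _ _ hker.symm) ≪≫ₗ (π.quotKerEquivOfSurjective hsurj)

lemma modFilt_quot_step (hr : IsSMulRegular N r) :
    ∀ (n : ℕ) (M : Type w) [AddCommGroup M] [Module R M], ModFilt R N n M →
      ModFilt R (N ⧸ (r • (⊤ : Submodule R N))) n (M ⧸ (r • (⊤ : Submodule R M))) := by
  intro n
  induction n with
  | zero =>
    intro M _ _ hf
    have : Subsingleton M := hf
    exact (Submodule.Quotient.mk_surjective _).subsingleton
  | succ n ih =>
    rintro M _ _ ⟨A, ⟨k, hk, ⟨eA⟩⟩, hQ⟩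
    have hrQ : IsSMulRegular (M ⧸ A) r := modFilt_isSMulRegular hr n _ hQ
    refine ⟨A.map (r • (⊤ : Submodule R M)).mkQ, ⟨k, hk, ⟨?_⟩⟩, ?_⟩
    · refine (imageEquivQuot A hrQ) ≪≫ₗ (Submodule.Quotient.equiv _ _ eA ?_) ≪≫ₗ
        (piQuotEquiv k r)
      show Submodule.map (eA : ↥A →ₗ[R] (Fin k → N)) (r • (⊤ : Submodule R ↥A)) = _
      rw [Submodule.map_pointwise_smul, Submodule.map_top,
        LinearEquiv.range]
    · exact modFilt_congr _ _ (doubleQuotEquiv A).symm (ih _ hQ)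

end quotstep

open RingTheory.Sequence in
lemma modFilt_isWeaklyRegular_up (rs : List R) :
    ∀ (N : Type v) [AddCommGroup N] [Module R N]
      (n : ℕ) (M : Type w) [AddCommGroup M] [Module R M],
      ModFilt R N n M → IsWeaklyRegular N rs → IsWeaklyRegular M rs := by
  induction rs with
  | nil => intro N _ _ n M _ _ _ _; exact IsWeaklyRegular.nil R M
  | cons r rs ih =>
    intro N _ _ n M _ _ hf hreg
    rw [isWeaklyRegular_cons_iff] at hreg ⊢
    obtain ⟨h1, h2⟩ := hreg
    exact ⟨modFilt_isSMulRegular h1 n M hf,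
      ih _ n _ (modFilt_quot_step h1 n M hf) h2⟩

open RingTheory.Sequence in
lemma modFilt_isWeaklyRegular_down (rs : List R) :
    ∀ (N : Type v) [AddCommGroup N] [Module R N]
      (n : ℕ) (M : Type w) [AddCommGroup M] [Module R M],
      ModFilt R N (n+1) M → IsWeaklyRegular M rs → IsWeaklyRegular N rs := by
  induction rs with
  | nil => intro N _ _ n M _ _ _ _; exact IsWeaklyRegular.nil R N
  | cons r rs ih =>
    intro N _ _ n M _ _ hf hreg
    rw [isWeaklyRegular_cons_iff] at hreg ⊢
    obtain ⟨h1, h2⟩ := hreg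
    obtain ⟨A, ⟨k, hk, ⟨eA⟩⟩, hQ⟩ := hf
    have hrN : IsSMulRegular N r :=
      isSMulRegular_of_pi hk
        ((LinearEquiv.isSMulRegular_congr eA r).mp (isSMulRegular_submodule h1 A))
    refine ⟨hrN, ?_⟩
    have hf' : ModFilt R N (n+1) M := ⟨A, ⟨k, hk, ⟨eA⟩⟩, hQ⟩
    exact ih _ n _ (modFilt_quot_step hrN (n+1) M hf') h2

section application

variable (P : Ideal R)

/-- The submodule `P^m/P^{m+1}` of `R/P^{m+1}`, as the image of `P^m`. -/
noncomputable abbrev powImage (m : ℕ) : Submodule R (R ⧸ (P ^ (m+1) : Ideal R)) :=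
  Submodule.map ((P ^ (m+1) : Ideal R)).mkQ ((P ^ m : Ideal R) : Submodule R R)

noncomputable def powImageEquiv (m : ℕ) :
    ↥(powImage P m) ≃ₗ[R]
      (↥(P ^ m : Ideal R) ⧸
        Submodule.comap (P ^ m : Ideal R).subtype (P ^ (m + 1) : Ideal R)) := by
  let f : ↥(P ^ m : Ideal R) →ₗ[R] R ⧸ (P ^ (m+1) : Ideal R) :=
    (P ^ (m+1) : Ideal R).mkQ.comp (P ^ m : Ideal R).subtype
  have hker : LinearMap.ker f =
      Submodule.comap (P ^ m : Ideal R).subtype (P ^ (m + 1) : Ideal R) := by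
    rw [show f = (P ^ (m+1) : Ideal R).mkQ.comp (P ^ m : Ideal R).subtype from rfl,
      LinearMap.ker_comp, Submodule.ker_mkQ]
  have hrange : LinearMap.range f = powImage P m := by
    rw [show f = (P ^ (m+1) : Ideal R).mkQ.comp (P ^ m : Ideal R).subtype from rfl,
      LinearMap.range_comp, Submodule.range_subtype]
  exact (LinearEquiv.ofEq _ _ hrange.symm) ≪≫ₗ (f.quotKerEquivRange).symm ≪≫ₗ
    (Submodule.quotEquivOfEq _ _ hker)

lemma filt_pow
    (hfree : ∀ n : ℕ, ∃ k : ℕ, Nonempty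
      ((↥(P ^ n : Ideal R) ⧸
          Submodule.comap (P ^ n : Ideal R).subtype (P ^ (n + 1) : Ideal R)) ≃ₗ[R]
        (Fin k → R ⧸ P))) :
    ∀ m : ℕ, (∀ i < m, P ^ i ≠ P ^ (i+1)) →
      ModFilt R (R ⧸ P) m (R ⧸ (P ^ m : Ideal R)) := by
  intro m
  induction m with
  | zero =>
    intro _
    rw [modFilt_zero_iff]
    rw [Submodule.Quotient.subsingleton_iff]
    simpa using (Ideal.one_eq_top (α := R)).symm ▸ (pow_zero P)
  | succ m ih =>
    intro hne
    obtain ⟨k, ⟨e0⟩⟩ := hfree m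
    have hJne : powImage P m ≠ ⊥ := by
      intro hbot
      apply hne m (Nat.lt_succ_self m)
      apply le_antisymm
      · intro x hx
        have hx' : (P ^ (m+1) : Ideal R).mkQ x ∈ powImage P m :=
          Submodule.mem_map_of_mem hx
        rw [hbot, Submodule.mem_bot] at hx'
        rwa [Submodule.mkQ_apply, Submodule.Quotient.mk_eq_zero] at hx'
      · exact Ideal.pow_le_pow_right (Nat.le_succ m)
    have hJnontriv : Nontrivial ↥(powImage P m) :=
      Submodule.nontrivial_iff_ne_bot.mpr hJne
    have hk : 0 < k := by
      rcases Nat.eq_zero_or_pos k with hk0 | hk0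
      · subst hk0
        have hsub : Subsingleton (Fin 0 → R ⧸ P) :=
          ⟨fun a b => funext fun i => i.elim0⟩
        have : Nontrivial (Fin 0 → R ⧸ P) :=
          (((powImageEquiv P m) ≪≫ₗ e0).symm.toEquiv).nontrivial
        exact absurd this (not_nontrivial_iff_subsingleton.mpr hsub)
      · exact hk0
    refine ⟨powImage P m, ⟨k, hk, ⟨(powImageEquiv P m) ≪≫ₗ e0⟩⟩, ?_⟩
    have hQ := ih (fun i hi => hne i (Nat.lt_succ_of_lt hi))
    exact modFilt_congr _ _
      (Submodule.quotientQuotientEquivQuotient (P ^ (m+1) : Ideal R) (P ^ m : Ideal R)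
        (Ideal.pow_le_pow_right (Nat.le_succ m))).symm hQ

end application

section dim

variable (P : Ideal R)

lemma ringKrullDim_quot_pow {m : ℕ} (hm : 1 ≤ m) :
    ringKrullDim (R ⧸ (P ^ m : Ideal R)) = ringKrullDim (R ⧸ P) := by
  have hle : (P ^ m : Ideal R) ≤ P := Ideal.pow_le_self (Nat.one_le_iff_ne_zero.mp hm)
  let f : R ⧸ (P ^ m : Ideal R) →+* R ⧸ P := Ideal.Quotient.factor hle
  have hsurj : Function.Surjective f := by
    intro y
    obtain ⟨x, rfl⟩ := Ideal.Quotient.mk_surjective y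
    exact ⟨Ideal.Quotient.mk _ x, Ideal.Quotient.factor_mk hle x⟩
  have hker : ∀ (q : Ideal (R ⧸ (P ^ m : Ideal R))), q.IsPrime → RingHom.ker f ≤ q := by
    intro q hq x hx
    obtain ⟨y, rfl⟩ := Ideal.Quotient.mk_surjective x
    have hy : y ∈ P := by
      rw [RingHom.mem_ker, Ideal.Quotient.factor_mk, Ideal.Quotient.eq_zero_iff_mem] at hx
      exact hx
    have hpow : (Ideal.Quotient.mk (P ^ m : Ideal R) y) ^ m = 0 := by
      rw [← map_pow, Ideal.Quotient.eq_zero_iff_mem]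
      exact Ideal.pow_mem_pow hy m
    exact hq.mem_of_pow_mem m (by rw [hpow]; exact q.zero_mem)
  let e : PrimeSpectrum (R ⧸ P) ≃o PrimeSpectrum (R ⧸ (P ^ m : Ideal R)) :=
    { toFun := fun q => ⟨q.asIdeal.comap f, Ideal.comap_isPrime f q.asIdeal⟩
      invFun := fun p => ⟨p.asIdeal.map f,
        Ideal.map_isPrime_of_surjective hsurj (hker p.asIdeal p.isPrime)⟩
      left_inv := by
        intro q
        apply PrimeSpectrum.ext
        show Ideal.map f (Ideal.comap f q.asIdeal) = q.asIdeal
        exact Ideal.map_comap_of_surjective f hsurj q.asIdeal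
      right_inv := by
        intro p
        apply PrimeSpectrum.ext
        show Ideal.comap f (Ideal.map f p.asIdeal) = p.asIdeal
        rw [Ideal.comap_map_of_surjective f hsurj p.asIdeal]
        exact sup_eq_left.mpr (hker p.asIdeal p.isPrime)
      map_rel_iff' := by
        intro q₁ q₂
        constructor
        · intro h
          have h' : Ideal.comap f q₁.asIdeal ≤ Ideal.comap f q₂.asIdeal :=
            (PrimeSpectrum.asIdeal_le_asIdeal _ _).mpr h
          rw [← PrimeSpectrum.asIdeal_le_asIdeal]
          have h2 := Ideal.map_mono (f := f) h'
          rwa [Ideal.map_comap_of_surjective f hsurj,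
            Ideal.map_comap_of_surjective f hsurj] at h2
        · intro h
          have h' : q₁.asIdeal ≤ q₂.asIdeal :=
            (PrimeSpectrum.asIdeal_le_asIdeal _ _).mpr h
          exact (PrimeSpectrum.asIdeal_le_asIdeal _ _).mp (Ideal.comap_mono h') }
  exact (Order.krullDim_eq_of_orderIso e).symm

end dim

end AuxiliaryFiltration

/-- Let `R` be a Noetherian local ring and `P` a prime ideal such that
`R/P` is Cohen–Macaulay and each `Pⁿ/Pⁿ⁺¹` is a projective — equivalently, free —
`R/P`-module (phrased as: `R`-linearly isomorphic to a finite direct sum of copies of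
`R/P`).  Then `R/Pⁿ` is a Cohen–Macaulay `R`-module for every `n ≥ 1`. -/
theorem quotient_power_cohenMacaulay {R : Type*} [CommRing R] [IsLocalRing R]
    [IsNoetherianRing R] (P : Ideal R) (hP : P.IsPrime)
    (hCM : IsCohenMacaulayModule R (R ⧸ P))
    (hfree : ∀ n : ℕ, ∃ k : ℕ, Nonempty
      ((↥(P ^ n : Ideal R) ⧸
          Submodule.comap (P ^ n : Ideal R).subtype (P ^ (n + 1) : Ideal R)) ≃ₗ[R]
        (Fin k → R ⧸ P))) :
    ∀ n : ℕ, 1 ≤ n → IsCohenMacaulayModule R (R ⧸ P ^ n) := by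
  classical
  have hPtop : P ≠ ⊤ := hP.ne_top
  have key : ∀ m : ℕ, 1 ≤ m → (∀ i < m, P ^ i ≠ P ^ (i+1)) →
      IsCohenMacaulayModule R (R ⧸ P ^ m) := by
    intro m hm hne
    obtain ⟨m', rfl⟩ : ∃ m', m = m' + 1 := ⟨m - 1, (Nat.succ_pred_eq_of_pos hm).symm⟩
    have hfilt : ModFilt R (R ⧸ P) (m' + 1) (R ⧸ (P ^ (m'+1) : Ideal R)) :=
      filt_pow P hfree _ hne
    have hPm_ne_top : (P ^ (m'+1) : Ideal R) ≠ ⊤ := by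
      intro h
      exact hPtop (top_le_iff.mp (h ▸ Ideal.pow_le_self (Nat.succ_ne_zero m')))
    haveI : Nontrivial (R ⧸ (P ^ (m'+1) : Ideal R)) :=
      Submodule.Quotient.nontrivial_iff.mpr hPm_ne_top
    haveI : Nontrivial (R ⧸ P) :=
      Submodule.Quotient.nontrivial_iff.mpr hPtop
    haveI : Module.Finite R (R ⧸ (P ^ (m'+1) : Ideal R)) :=
      Module.Finite.of_surjective (Submodule.mkQ _) (Submodule.Quotient.mk_surjective _)
    haveI : Module.Finite R (R ⧸ P) :=
      Module.Finite.of_surjective (Submodule.mkQ ((P : Submodule R R)))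
        (Submodule.Quotient.mk_surjective _)
    have hdepth : moduleDepth R (R ⧸ (P ^ (m'+1) : Ideal R)) = moduleDepth R (R ⧸ P) := by
      unfold moduleDepth
      congr 1
      ext d
      simp only [Set.mem_setOf_eq]
      constructor
      · rintro ⟨rs, hlen, hmem, hreg⟩
        refine ⟨rs, hlen, hmem, ?_⟩
        rw [IsLocalRing.isRegular_iff_isWeaklyRegular_of_subset_maximalIdeal hmem] at hreg ⊢
        exact modFilt_isWeaklyRegular_down rs _ m' _ hfilt hreg
      · rintro ⟨rs, hlen, hmem, hreg⟩
        refine ⟨rs, hlen, hmem, ?_⟩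
        rw [IsLocalRing.isRegular_iff_isWeaklyRegular_of_subset_maximalIdeal hmem] at hreg ⊢
        exact modFilt_isWeaklyRegular_up rs _ (m'+1) _ hfilt hreg
    have hdim : moduleDim R (R ⧸ (P ^ (m'+1) : Ideal R)) = moduleDim R (R ⧸ P) := by
      unfold moduleDim
      rw [Ideal.annihilator_quotient, Ideal.annihilator_quotient]
      exact ringKrullDim_quot_pow P (Nat.succ_le_succ (Nat.zero_le m'))
    show (moduleDepth R (R ⧸ (P ^ (m'+1) : Ideal R)) : WithBot ℕ∞) =
      moduleDim R (R ⧸ (P ^ (m'+1) : Ideal R))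
    rw [hdepth, hdim]
    exact hCM
  intro n hn
  by_cases hcase : ∀ i < n, P ^ i ≠ P ^ (i+1)
  · exact key n hn hcase
  · push_neg at hcase
    obtain ⟨i0, hi0n, hi0⟩ := hcase
    have hex : ∃ i, P ^ i = P ^ (i+1) := ⟨i0, hi0⟩
    have hmspec : P ^ (Nat.find hex) = P ^ (Nat.find hex + 1) := Nat.find_spec hex
    set m := Nat.find hex with hmdef
    have hmmin : ∀ i < m, P ^ i ≠ P ^ (i+1) := fun i hi => Nat.find_min hex hi
    have hm1 : 1 ≤ m := by
      rcases Nat.eq_zero_or_pos m with h0 | h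
      · exfalso
        rw [h0] at hmspec
        rw [pow_zero, pow_one] at hmspec
        rw [Ideal.one_eq_top] at hmspec
        exact hPtop hmspec.symm
      · exact h
    have hmn : m ≤ n := le_of_lt (lt_of_le_of_lt (Nat.find_le hi0) hi0n)
    have hstab : ∀ j : ℕ, P ^ (m + j) = P ^ m := by
      intro j
      induction j with
      | zero => rfl
      | succ j ihj =>
        have : m + (j + 1) = (m + j) + 1 := by omega
        rw [this, pow_succ, ihj, ← pow_succ]
        exact hmspec.symm
    have hPn : P ^ n = P ^ m := by
      have : n = m + (n - m) := by omega
      rw [this]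
      exact hstab (n - m)
    rw [hPn]
    exact key m hm1 hmmin
end
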